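/- arXiv:2507.17902 — 3 statements merged into one kernel-verified Lean document; each statement's English description precedes it below -/
import Mathlib

section
/- Let n ≥ 2, let x be an involution (element of order 2) in the alternating group Aₙ on n letters, let 𝒞 be the conjugacy class of x in Aₙ, and let s denote the number of fixed points of x in its natural action on n letters. Then the commuting graph on 𝒞 is disconnected if and only if n ≡ 1 (mod 4) and s = 1. -/
/-- The Killing graph of a conjugation-stable subset `C` of a group `G`:
vertices are the elements of `C`, and distinct `a b : C` are adjacent iff the
centraliser of `a * b` meets `C`, i.e. iff the Killing form `K_C(a,b)` is nonzero. -/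
def killingGraph {G : Type*} [Group G] (C : Set G) : SimpleGraph C :=
  SimpleGraph.fromRel fun a b => ∃ c ∈ C, Commute c ((a : G) * (b : G))

/-- The commuting graph on a subset `C` of a group: distinct elements are
adjacent iff they commute. -/
def commGraph {G : Type*} [Group G] (C : Set G) : SimpleGraph C :=
  SimpleGraph.fromRel fun a b => Commute (a : G) (b : G)

/-- The matrix of the Killing form on `C` over `ℚ`:
`K_C(a,b) = |C_G(ab) ∩ C|`. -/
noncomputable def killingMatrix {G : Type*} [Group G] (C : Set G) [Fintype C] :
    Matrix C C ℚ :=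
  Matrix.of fun a b => (Set.ncard {c ∈ C | Commute c ((a : G) * (b : G))} : ℚ)

/-- The set of involutions of a group. -/
def involSet (G : Type*) [Monoid G] : Set G := {x | x ^ 2 = 1 ∧ x ≠ 1}

set_option linter.unusedSectionVars false

open Equiv Equiv.Perm Finset

variable {α : Type*} [DecidableEq α]

lemma commute_of_conj_eq {σ τ : Perm α} (h : σ * τ * σ⁻¹ = τ) : Commute σ τ := by
  have : σ * τ = τ * σ := by
    calc σ * τ = (σ * τ * σ⁻¹) * σ := by group
    _ = τ * σ := by rw [h]
  exact this

lemma conj_swap (σ : Perm α) (a b : α) : σ * swap a b * σ⁻¹ = swap (σ a) (σ b) :=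
  (swap_apply_apply σ a b).symm

lemma commute_swap_of_map {σ : Perm α} {a b : α} (h1 : σ a = b) (h2 : σ b = a) :
    Commute σ (swap a b) := by
  apply commute_of_conj_eq
  rw [conj_swap, h1, h2, swap_comm]

lemma commute_swap_of_fixed {σ : Perm α} {a b : α} (h1 : σ a = a) (h2 : σ b = b) :
    Commute σ (swap a b) := by
  apply commute_of_conj_eq
  rw [conj_swap, h1, h2]

lemma disjoint_swap_commute {a b c d : α} (hac : a ≠ c) (had : a ≠ d) (hbc : b ≠ c)
    (hbd : b ≠ d) : Commute (swap a b) (swap c d) := by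
  apply commute_swap_of_fixed
  · exact swap_apply_of_ne_of_ne hac.symm hbc.symm |>.symm ▸ rfl
  · exact swap_apply_of_ne_of_ne had.symm hbd.symm

lemma commute_swap_pair {σ : Perm α} {a b c d : α}
    (hac : a ≠ c) (had : a ≠ d) (hbc : b ≠ c) (hbd : b ≠ d)
    (h1 : σ a = c) (h2 : σ b = d) (h3 : σ c = a) (h4 : σ d = b) :
    Commute σ (swap a b * swap c d) := by
  apply commute_of_conj_eq
  have e1 : σ * (swap a b * swap c d) * σ⁻¹
      = (σ * swap a b * σ⁻¹) * (σ * swap c d * σ⁻¹) := by group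
  rw [e1, conj_swap, conj_swap, h1, h2, h3, h4]
  exact (disjoint_swap_commute hac.symm hbc.symm had.symm hbd.symm).eq

section Core

variable [Fintype α]

/-- The conjugacy class of `x` in the alternating group. -/
abbrev Cl (x : alternatingGroup α) : Set (alternatingGroup α) := {h | IsConj x h}

/-- The commuting graph on the class. -/
abbrev Gr (x : alternatingGroup α) : SimpleGraph (Cl x) := commGraph (Cl x)

/-- conjugate of an alternating element by an arbitrary permutation. -/
def conjElt (g : Perm α) (u : alternatingGroup α) : alternatingGroup α :=
  ⟨g * ↑u * g⁻¹, by
    rw [Equiv.Perm.mem_alternatingGroup]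
    rw [map_mul, map_mul, map_inv, Equiv.Perm.mem_alternatingGroup.mp u.2]
    simp⟩

variable (x : alternatingGroup α)
variable (hne : (↑x : Perm α) ≠ 1) (h2 : (↑x : Perm α) ^ 2 = 1)

include h2 in
lemma x_inv_apply (a : α) : (↑x : Perm α) ((↑x : Perm α) a) = a := by
  have : ((↑x : Perm α) * (↑x : Perm α)) a = (1 : Perm α) a := by rw [← pow_two, h2]
  simpa using this

include hne h2 in
lemma isConj_of_permConj (y : alternatingGroup α) (g : Perm α)
    (hg : g * ↑x * g⁻¹ = (↑y : Perm α)) : IsConj x y := by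
  obtain ⟨p, hp⟩ : ∃ p, (↑x : Perm α) p ≠ p := by
    by_contra h
    push_neg at h
    exact hne (Equiv.ext h)
  have hxt : Commute (↑x : Perm α) (swap p ((↑x : Perm α) p)) :=
    commute_swap_of_map rfl (x_inv_apply x h2 p)
  rcases Int.units_eq_one_or (Equiv.Perm.sign g) with hsg | hsg
  · refine isConj_iff.mpr ⟨⟨g, Equiv.Perm.mem_alternatingGroup.mpr hsg⟩, ?_⟩
    exact Subtype.ext hg
  · set t := swap p ((↑x : Perm α) p) with ht
    have hst : Equiv.Perm.sign t = -1 := Equiv.Perm.sign_swap (Ne.symm hp)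
    have hmem : g * t ∈ alternatingGroup α := by
      rw [Equiv.Perm.mem_alternatingGroup, map_mul, hsg, hst]
      decide
    refine isConj_iff.mpr ⟨⟨g * t, hmem⟩, ?_⟩
    apply Subtype.ext
    show (g * t) * ↑x * (g * t)⁻¹ = (↑y : Perm α)
    have : t * ↑x * t⁻¹ = (↑x : Perm α) := by
      have := hxt.symm.eq
      calc t * ↑x * t⁻¹ = (t * ↑x) * t⁻¹ := by ring_nf
      _ = (↑x * t) * t⁻¹ := by rw [this]
      _ = ↑x := by group
    calc (g * t) * ↑x * (g * t)⁻¹ = g * (t * ↑x * t⁻¹) * g⁻¹ := by group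
    _ = g * ↑x * g⁻¹ := by rw [this]
    _ = (↑y : Perm α) := hg

include hne h2 in
lemma conj_mem_cl {u : alternatingGroup α} (hu : u ∈ Cl x) (g : Perm α) :
    conjElt g u ∈ Cl x := by
  obtain ⟨c, hc⟩ := isConj_iff.mp hu
  apply isConj_of_permConj x hne h2 (conjElt g u) (g * ↑c)
  have hc' : (↑c : Perm α) * ↑x * (↑c)⁻¹ = ↑u := by
    have := congrArg (Subtype.val) hc
    simpa using this
  show (g * ↑c) * ↑x * (g * ↑c)⁻¹ = g * ↑u * g⁻¹
  calc (g * ↑c) * ↑x * (g * ↑c)⁻¹ = g * ((↑c : Perm α) * ↑x * (↑c)⁻¹) * g⁻¹ := by group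
  _ = g * ↑u * g⁻¹ := by rw [hc']

include hne h2 in
lemma adj_of_commute {u v : (Cl x : Set (alternatingGroup α))}
    (hnuv : ((u : alternatingGroup α) : Perm α) ≠ ((v : alternatingGroup α) : Perm α))
    (hc : Commute ((u : alternatingGroup α) : Perm α) ((v : alternatingGroup α) : Perm α)) :
    (Gr x).Adj u v := by
  simp only [commGraph, SimpleGraph.fromRel_adj]
  refine ⟨?_, Or.inl ?_⟩
  · intro h
    exact hnuv (by rw [h])
  · exact Subtype.ext hc

/-- conjugation as a map on the class -/
def cmap (g : Perm α) (u : (Cl x : Set (alternatingGroup α))) :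
    (Cl x : Set (alternatingGroup α)) :=
  ⟨conjElt g ↑u, conj_mem_cl x hne h2 u.2 g⟩

def cHom (g : Perm α) : (Gr x) →g (Gr x) where
  toFun := cmap x hne h2 g
  map_rel' := by
    intro u v huv
    simp only [commGraph, SimpleGraph.fromRel_adj] at huv ⊢
    obtain ⟨hne', hc⟩ := huv
    constructor
    · intro h
      apply hne'
      have : conjElt g ↑u = conjElt g ↑v := congrArg Subtype.val h
      have h2 : (g : Perm α) * ↑↑u * g⁻¹ = g * ↑↑v * g⁻¹ := congrArg Subtype.val this
      have : ((u : alternatingGroup α) : Perm α) = ↑↑v := by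
        have := mul_right_cancel h2
        exact mul_left_cancel this
      exact Subtype.ext (Subtype.ext this)
    · have hcc : Commute ((u : alternatingGroup α) : Perm α) ↑↑v := by
        rcases hc with h | h
        · exact congrArg Subtype.val h.eq
        · exact congrArg Subtype.val h.symm.eq
      left
      apply Subtype.ext
      show (g * ↑↑u * g⁻¹) * (g * ↑↑v * g⁻¹) = (g * ↑↑v * g⁻¹) * (g * ↑↑u * g⁻¹)
      calc (g * ↑↑u * g⁻¹) * (g * ↑↑v * g⁻¹) = g * (↑↑u * ↑↑v) * g⁻¹ := by group
      _ = g * (↑↑v * ↑↑u) * g⁻¹ := by rw [hcc.eq]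
      _ = (g * ↑↑v * g⁻¹) * (g * ↑↑u * g⁻¹) := by group

end Core

section H

variable {α : Type*} [DecidableEq α] [Fintype α]
variable (x : alternatingGroup α)
variable (hne : (↑x : Perm α) ≠ 1) (h2 : (↑x : Perm α) ^ 2 = 1)

/-- the base vertex -/
def vx : (Cl x : Set (alternatingGroup α)) := ⟨x, IsConj.refl x⟩

/-- vertex given by conjugating `x` by an arbitrary permutation -/
def cv (g : Perm α) : (Cl x : Set (alternatingGroup α)) :=
  cmap x hne h2 g (vx x)

include hne h2 in
lemma reach_mul {g1 g2 : Perm α}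
    (hr1 : (Gr x).Reachable (vx x) (cv x hne h2 g1))
    (hr2 : (Gr x).Reachable (vx x) (cv x hne h2 g2)) :
    (Gr x).Reachable (vx x) (cv x hne h2 (g1 * g2)) := by
  have hmap := SimpleGraph.Reachable.map (cHom x hne h2 g1) hr2
  have e1 : (cHom x hne h2 g1) (vx x) = cv x hne h2 g1 := rfl
  have e2 : (cHom x hne h2 g1) (cv x hne h2 g2) = cv x hne h2 (g1 * g2) := by
    apply Subtype.ext; apply Subtype.ext
    show g1 * (g2 * ↑x * g2⁻¹) * g1⁻¹ = (g1 * g2) * ↑x * (g1 * g2)⁻¹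
    group
  rw [e1, e2] at hmap
  exact hr1.trans hmap

include hne h2 in
lemma reach_inv {g : Perm α}
    (hr : (Gr x).Reachable (vx x) (cv x hne h2 g)) :
    (Gr x).Reachable (vx x) (cv x hne h2 g⁻¹) := by
  have hmap := SimpleGraph.Reachable.map (cHom x hne h2 g⁻¹) hr
  have e1 : (cHom x hne h2 g⁻¹) (vx x) = cv x hne h2 g⁻¹ := rfl
  have e2 : (cHom x hne h2 g⁻¹) (cv x hne h2 g) = vx x := by
    apply Subtype.ext; apply Subtype.ext
    show g⁻¹ * (g * ↑x * g⁻¹) * (g⁻¹)⁻¹ = (↑x : Perm α)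
    group
  rw [e1, e2] at hmap
  exact hmap.symm

/-- The subgroup of permutations `g` such that the conjugate of `x` by `g`
is reachable from `x` in the commuting graph. -/
def Hgrp : Subgroup (Perm α) where
  carrier := {g | (Gr x).Reachable (vx x) (cv x hne h2 g)}
  one_mem' := by
    have : cv x hne h2 1 = vx x := by
      apply Subtype.ext; apply Subtype.ext
      show (1 : Perm α) * ↑x * 1⁻¹ = (↑x : Perm α)
      group
    show (Gr x).Reachable _ _
    rw [this]
  mul_mem' := fun h1 h2' => reach_mul x hne h2 h1 h2'
  inv_mem' := fun h => reach_inv x hne h2 h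

end H

section Swap

variable {α : Type*} [DecidableEq α] [Fintype α]
variable (x : alternatingGroup α)
variable (hne : (↑x : Perm α) ≠ 1) (h2 : (↑x : Perm α) ^ 2 = 1)
variable (hs : (Finset.univ.filter fun a : α => (↑x : Perm α) a = a).card ≠ 1)


include hne h2 in
lemma conj_eq_self_of_commute {g : Perm α} (hc : Commute (↑x : Perm α) g) :
    cv x hne h2 g = vx x := by
  apply Subtype.ext; apply Subtype.ext
  show g * ↑x * g⁻¹ = (↑x : Perm α)
  calc g * ↑x * g⁻¹ = (g * ↑x) * g⁻¹ := rfl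
  _ = (↑x * g) * g⁻¹ := by rw [hc.symm.eq]
  _ = ↑x := by group

include hne h2 in
lemma case4 {p q : α} (hpq : p ≠ q) (hxp : (↑x : Perm α) p ≠ p)
    (hxq : (↑x : Perm α) q ≠ q) (hxpq : (↑x : Perm α) p ≠ q) :
    (Gr x).Reachable (vx x) (cv x hne h2 (swap p q)) := by
  set X : Perm α := ↑x with hX
  have hinv : ∀ a, X (X a) = a := x_inv_apply x h2
  obtain ⟨p', hp'⟩ : ∃ y, X p = y := ⟨X p, rfl⟩
  obtain ⟨q', hq'⟩ : ∃ y, X q = y := ⟨X q, rfl⟩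
  have hXp' : X p' = p := by rw [← hp', hinv]
  have hXq' : X q' = q := by rw [← hq', hinv]
  have hp'p : p' ≠ p := by rw [← hp']; exact hxp
  have hq'q : q' ≠ q := by rw [← hq']; exact hxq
  have hp'q : p' ≠ q := by rw [← hp']; exact hxpq
  have hq'p : q' ≠ p := by
    intro h
    apply hxpq
    rw [← h, hXq']
  have hp'q' : p' ≠ q' := by
    intro h
    apply hpq
    rw [← hinv p, hp', h, hXq']
  set τ := swap p q with hτ
  set Y : Perm α := τ * X * τ⁻¹ with hY
  have yv : ∀ i, Y i = τ (X (τ i)) := by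
    intro i
    rw [hY, Equiv.swap_inv]
    rfl
  have hτp' : τ p' = p' := swap_apply_of_ne_of_ne hp'p hp'q
  have hτq' : τ q' = q' := swap_apply_of_ne_of_ne hq'p hq'q
  have hYp : Y p = q' := by rw [yv, swap_apply_left, hq', hτq']
  have hYq : Y q = p' := by rw [yv, swap_apply_right, hp', hτp']
  have hYp' : Y p' = q := by rw [yv, hτp', hXp', swap_apply_left]
  have hYq' : Y q' = p := by rw [yv, hτq', hXq', swap_apply_right]
  have hXne : ∀ i, i ≠ p' → i ≠ q' → X i ≠ p ∧ X i ≠ q := by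
    intro i h3 h4
    constructor
    · intro h
      apply h3
      rw [← hinv i, h, hp']
    · intro h
      apply h4
      rw [← hinv i, h, hq']
  have hYgen : ∀ i, i ≠ p → i ≠ q → i ≠ p' → i ≠ q' → Y i = X i := by
    intro i h1 h2' h3 h4
    obtain ⟨hh1, hh2⟩ := hXne i h3 h4
    rw [yv, swap_apply_of_ne_of_ne h1 h2']
    exact swap_apply_of_ne_of_ne hh1 hh2
  have hcomm : Commute X Y := by
    show X * Y = Y * X
    apply Equiv.ext
    intro i
    simp only [mul_apply]
    rcases eq_or_ne i p with rfl | hip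
    · rw [hYp, hXq', hp', hYp']
    rcases eq_or_ne i q with rfl | hiq
    · rw [hYq, hXp', hq', hYq']
    rcases eq_or_ne i p' with rfl | hip'
    · rw [hYp', hq', hXp', hYp]
    rcases eq_or_ne i q' with rfl | hiq'
    · rw [hYq', hp', hXq', hYq]
    · obtain ⟨hh1, hh2⟩ := hXne i hip' hiq'
      have hh3 : X i ≠ p' := by
        intro h
        apply hip
        rw [← hinv i, h, hXp']
      have hh4 : X i ≠ q' := by
        intro h
        apply hiq
        rw [← hinv i, h, hXq']
      rw [hYgen i hip hiq hip' hiq', hinv, hYgen (X i) hh1 hh2 hh3 hh4, hinv]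
  have hnexy : X ≠ Y := by
    intro h
    apply hp'q'
    rw [← hp', h, hYp]
  exact (adj_of_commute x hne h2 hnexy hcomm).reachable

include hne h2 hs in
lemma case3 {p q : α} (hpq : p ≠ q) (hxp : (↑x : Perm α) p ≠ p)
    (hxq : (↑x : Perm α) q = q) :
    (Gr x).Reachable (vx x) (cv x hne h2 (swap p q)) := by
  set X : Perm α := ↑x with hX
  have hinv : ∀ i, X (X i) = i := x_inv_apply x h2
  obtain ⟨p', hp'⟩ : ∃ y, X p = y := ⟨X p, rfl⟩
  have hXp' : X p' = p := by rw [← hp', hinv]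
  have hp'p : p' ≠ p := by rw [← hp']; exact hxp
  have hp'q : p' ≠ q := by
    intro h
    apply hpq
    rw [← hinv p, hp', h]
    exact hxq
  -- a point moved by X outside {p, p'}
  obtain ⟨a, hxa, hap, hap'⟩ : ∃ a, X a ≠ a ∧ a ≠ p ∧ a ≠ p' := by
    by_contra hcon
    push_neg at hcon
    have hXsw : X = swap p p' := by
      apply Equiv.ext
      intro i
      rcases eq_or_ne i p with rfl | hip
      · rw [hp', swap_apply_left]
      rcases eq_or_ne i p' with rfl | hip'
      · rw [hXp', swap_apply_right]
      · rw [swap_apply_of_ne_of_ne hip hip']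
        by_contra hxi
        exact hip' (hcon i hxi hip)
    have hsx : Equiv.Perm.sign X = 1 := Equiv.Perm.mem_alternatingGroup.mp x.2
    rw [hXsw, Equiv.Perm.sign_swap hp'p.symm] at hsx
    exact absurd hsx (by decide)
  obtain ⟨b, hab⟩ : ∃ y, X a = y := ⟨X a, rfl⟩
  have hXb : X b = a := by rw [← hab, hinv]
  have hba : b ≠ a := by rw [← hab]; exact hxa
  have hbp : b ≠ p := by
    intro h
    apply hap'
    rw [← hinv a, hab, h, hp']
  have hbp' : b ≠ p' := by
    intro h
    apply hap
    rw [← hinv a, hab, h, hXp']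
  have haq : a ≠ q := by
    intro h
    apply hxa
    rw [h]
    exact hxq
  have hbq : b ≠ q := by
    intro h
    apply hba
    rw [← hXb, h]
    exact hxq.symm
  -- a second fixed point g ≠ q
  have hqmem : q ∈ Finset.univ.filter fun i : α => X i = i := by
    simp [hxq]
  have hcard2 : 1 < (Finset.univ.filter fun i : α => X i = i).card := by
    have h0 : 0 < (Finset.univ.filter fun i : α => X i = i).card :=
      Finset.card_pos.mpr ⟨q, hqmem⟩
    omega
  obtain ⟨g, hgmem, hgq⟩ := Finset.exists_mem_ne hcard2 q
  have hXg : X g = g := by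
    simpa using (Finset.mem_filter.mp hgmem).2
  have hgp : g ≠ p := by
    intro h; apply hxp; rw [← h]; exact hXg
  have hgp' : g ≠ p' := by
    intro h; apply hp'p; rw [← hXp', ← h]; exact hXg.symm
  have hga : g ≠ a := by
    intro h; apply hxa; rw [← h]; exact hXg
  have hgb : g ≠ b := by
    intro h; apply hba; rw [← hXb, ← h]; exact hXg.symm
  -- membership of generic points
  have hXmem : ∀ i, i ≠ p → i ≠ p' → i ≠ q → i ≠ g → i ≠ a → i ≠ b →
      (X i ≠ p ∧ X i ≠ p' ∧ X i ≠ q ∧ X i ≠ g ∧ X i ≠ a ∧ X i ≠ b) := by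
    intro i h1 h2' h3 h4 h5 h6
    refine ⟨?_, ?_, ?_, ?_, ?_, ?_⟩
    · intro h; apply h2'; rw [← hinv i, h, hp']
    · intro h; apply h1; rw [← hinv i, h, hXp']
    · intro h; apply h3; rw [← hinv i, h, hxq]
    · intro h; apply h4; rw [← hinv i, h, hXg]
    · intro h; apply h6; rw [← hinv i, h, hab]
    · intro h; apply h5; rw [← hinv i, h, hXb]
  -- the chain of elements
  set t1 : Perm α := swap a b * swap q g with ht1
  set t2 : Perm α := swap p g * swap p' q with ht2
  set t3 : Perm α := swap p p' * swap q g with ht3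
  set t4 : Perm α := swap p g * swap a b with ht4
  set A : Perm α := X * t1 with hA
  set B : Perm α := A * t2 with hB
  set C : Perm α := B * t3 with hC
  set τ : Perm α := swap p q with hτ
  set Y : Perm α := τ * X * τ⁻¹ with hY
  -- value tables
  have hAv : ∀ i, A i = X (swap a b (swap q g i)) := fun i => rfl
  have hAp : A p = p' := by
    rw [hAv, swap_apply_of_ne_of_ne hpq hgp.symm,
      swap_apply_of_ne_of_ne hap.symm hbp.symm, hp']
  have hAp' : A p' = p := by
    rw [hAv, swap_apply_of_ne_of_ne hp'q hgp'.symm,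
      swap_apply_of_ne_of_ne hap'.symm hbp'.symm, hXp']
  have hAq : A q = g := by
    rw [hAv, swap_apply_left, swap_apply_of_ne_of_ne hga hgb, hXg]
  have hAg : A g = q := by
    rw [hAv, swap_apply_right, swap_apply_of_ne_of_ne haq.symm hbq.symm, hxq]
  have hAa : A a = a := by
    rw [hAv, swap_apply_of_ne_of_ne haq hga.symm, swap_apply_left, hXb]
  have hAb : A b = b := by
    rw [hAv, swap_apply_of_ne_of_ne hbq hgb.symm, swap_apply_right, hab]
  have hAgen : ∀ i, i ≠ p → i ≠ p' → i ≠ q → i ≠ g → i ≠ a → i ≠ b → A i = X i := by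
    intro i h1 h2' h3 h4 h5 h6
    rw [hAv, swap_apply_of_ne_of_ne h3 h4, swap_apply_of_ne_of_ne h5 h6]
  have hBv : ∀ i, B i = A (swap p g (swap p' q i)) := fun i => rfl
  have hBp : B p = q := by
    rw [hBv, swap_apply_of_ne_of_ne hp'p.symm hpq, swap_apply_left, hAg]
  have hBq : B q = p := by
    rw [hBv, swap_apply_right, swap_apply_of_ne_of_ne hp'p hgp'.symm, hAp']
  have hBp' : B p' = g := by
    rw [hBv, swap_apply_left, swap_apply_of_ne_of_ne hpq.symm hgq.symm, hAq]
  have hBg : B g = p' := by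
    rw [hBv, swap_apply_of_ne_of_ne hgp' hgq, swap_apply_right, hAp]
  have hBa : B a = a := by
    rw [hBv, swap_apply_of_ne_of_ne hap' haq, swap_apply_of_ne_of_ne hap hga.symm, hAa]
  have hBb : B b = b := by
    rw [hBv, swap_apply_of_ne_of_ne hbp' hbq, swap_apply_of_ne_of_ne hbp hgb.symm, hAb]
  have hBgen : ∀ i, i ≠ p → i ≠ p' → i ≠ q → i ≠ g → i ≠ a → i ≠ b → B i = X i := by
    intro i h1 h2' h3 h4 h5 h6
    rw [hBv, swap_apply_of_ne_of_ne h2' h3, swap_apply_of_ne_of_ne h1 h4]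
    exact hAgen i h1 h2' h3 h4 h5 h6
  have hCv : ∀ i, C i = B (swap p p' (swap q g i)) := fun i => rfl
  have hCp : C p = g := by
    rw [hCv, swap_apply_of_ne_of_ne hpq hgp.symm, swap_apply_left, hBp']
  have hCp' : C p' = q := by
    rw [hCv, swap_apply_of_ne_of_ne hp'q hgp'.symm, swap_apply_right, hBp]
  have hCq : C q = p' := by
    rw [hCv, swap_apply_left, swap_apply_of_ne_of_ne hgp hgp', hBg]
  have hCg : C g = p := by
    rw [hCv, swap_apply_right, swap_apply_of_ne_of_ne hpq.symm hp'q.symm, hBq]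
  have hCa : C a = a := by
    rw [hCv, swap_apply_of_ne_of_ne haq hga.symm, swap_apply_of_ne_of_ne hap hap', hBa]
  have hCb : C b = b := by
    rw [hCv, swap_apply_of_ne_of_ne hbq hgb.symm, swap_apply_of_ne_of_ne hbp hbp', hBb]
  have hCgen : ∀ i, i ≠ p → i ≠ p' → i ≠ q → i ≠ g → i ≠ a → i ≠ b → C i = X i := by
    intro i h1 h2' h3 h4 h5 h6
    rw [hCv, swap_apply_of_ne_of_ne h3 h4, swap_apply_of_ne_of_ne h1 h2']
    exact hBgen i h1 h2' h3 h4 h5 h6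
  have hYv : ∀ i, Y i = τ (X (τ i)) := by
    intro i
    rw [hY, hτ, Equiv.swap_inv]
    rfl
  have hYp : Y p = p := by rw [hYv, hτ, swap_apply_left, hxq, swap_apply_right]
  have hYq : Y q = p' := by
    rw [hYv, hτ, swap_apply_right, hp', swap_apply_of_ne_of_ne hp'p hp'q]
  have hYp' : Y p' = q := by
    rw [hYv, hτ, swap_apply_of_ne_of_ne hp'p hp'q, hXp', swap_apply_left]
  have hYg : Y g = g := by
    rw [hYv, hτ, swap_apply_of_ne_of_ne hgp hgq, hXg, swap_apply_of_ne_of_ne hgp hgq]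
  have hYa : Y a = b := by
    rw [hYv, hτ, swap_apply_of_ne_of_ne hap haq, hab, swap_apply_of_ne_of_ne hbp hbq]
  have hYb : Y b = a := by
    rw [hYv, hτ, swap_apply_of_ne_of_ne hbp hbq, hXb, swap_apply_of_ne_of_ne hap haq]
  have hYgen : ∀ i, i ≠ p → i ≠ p' → i ≠ q → i ≠ g → i ≠ a → i ≠ b → Y i = X i := by
    intro i h1 h2' h3 h4 h5 h6
    obtain ⟨k1, k2, k3, k4, k5, k6⟩ := hXmem i h1 h2' h3 h4 h5 h6
    rw [hYv, hτ, swap_apply_of_ne_of_ne h1 h3, swap_apply_of_ne_of_ne k1 k3]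
  -- commutations
  have hxA : Commute X A := by
    rw [hA]
    exact (Commute.refl X).mul_right
      ((commute_swap_of_map hab hXb).mul_right (commute_swap_of_fixed hxq hXg))
  have hAB : Commute A B := by
    rw [hB]
    exact (Commute.refl A).mul_right
      (commute_swap_pair hp'p.symm hpq hgp' hgq hAp hAg hAp' hAq)
  have hBC : Commute B C := by
    rw [hC]
    exact (Commute.refl B).mul_right
      (commute_swap_pair hpq hgp.symm hp'q hgp'.symm hBp hBp' hBq hBg)
  have hEY : Y = C * t4 := by
    apply Equiv.ext
    intro i
    have hrhs : (C * t4) i = C (swap p g (swap a b i)) := rfl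
    rw [hrhs]
    rcases eq_or_ne i p with rfl | h1
    · rw [hYp, swap_apply_of_ne_of_ne hap.symm hbp.symm, swap_apply_left, hCg]
    rcases eq_or_ne i g with rfl | h4
    · rw [hYg, swap_apply_of_ne_of_ne hga hgb, swap_apply_right, hCp]
    rcases eq_or_ne i a with rfl | h5
    · rw [hYa, swap_apply_left, swap_apply_of_ne_of_ne hbp hgb.symm, hCb]
    rcases eq_or_ne i b with rfl | h6
    · rw [hYb, swap_apply_right, swap_apply_of_ne_of_ne hap hga.symm, hCa]
    rcases eq_or_ne i q with rfl | h3
    · rw [hYq, swap_apply_of_ne_of_ne haq.symm hbq.symm,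
        swap_apply_of_ne_of_ne hpq.symm hgq.symm, hCq]
    rcases eq_or_ne i p' with rfl | h2'
    · rw [hYp', swap_apply_of_ne_of_ne hap'.symm hbp'.symm,
        swap_apply_of_ne_of_ne hp'p hgp'.symm, hCp']
    · rw [hYgen i h1 h2' h3 h4 h5 h6, swap_apply_of_ne_of_ne h5 h6,
        swap_apply_of_ne_of_ne h1 h4, hCgen i h1 h2' h3 h4 h5 h6]
  have hCY : Commute C Y := by
    rw [hEY]
    exact (Commute.refl C).mul_right
      ((commute_swap_of_map hCp hCg).mul_right (commute_swap_of_fixed hCa hCb))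
  -- signs
  have hsX : Equiv.Perm.sign X = 1 := Equiv.Perm.mem_alternatingGroup.mp x.2
  have memA : A ∈ alternatingGroup α := by
    rw [Equiv.Perm.mem_alternatingGroup, hA, ht1, map_mul, map_mul, hsX,
      Equiv.Perm.sign_swap hba.symm, Equiv.Perm.sign_swap hgq.symm]
    decide
  have memB : B ∈ alternatingGroup α := by
    rw [Equiv.Perm.mem_alternatingGroup, hB, hA, ht1, ht2]
    simp only [map_mul, hsX, Equiv.Perm.sign_swap hba.symm,
      Equiv.Perm.sign_swap hgq.symm, Equiv.Perm.sign_swap hgp.symm,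
      Equiv.Perm.sign_swap hp'q]
    decide
  have memC : C ∈ alternatingGroup α := by
    rw [Equiv.Perm.mem_alternatingGroup, hC, hB, hA, ht1, ht2, ht3]
    simp only [map_mul, hsX, Equiv.Perm.sign_swap hba.symm,
      Equiv.Perm.sign_swap hgq.symm, Equiv.Perm.sign_swap hgp.symm,
      Equiv.Perm.sign_swap hp'q, Equiv.Perm.sign_swap hp'p.symm]
    decide
  -- conjugators
  set α₁ : Perm α := swap a q * swap b g with hα₁
  have hEα : α₁ * X * α₁⁻¹ = A := by
    have key : α₁ * X = A * α₁ := by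
      apply Equiv.ext
      intro i
      have hl : (α₁ * X) i = swap a q (swap b g (X i)) := rfl
      have hr : (A * α₁) i = A (swap a q (swap b g i)) := rfl
      rw [hl, hr]
      rcases eq_or_ne i p with rfl | h1
      · rw [hp', swap_apply_of_ne_of_ne hbp'.symm hgp'.symm,
          swap_apply_of_ne_of_ne hap'.symm hp'q,
          swap_apply_of_ne_of_ne hbp.symm hgp.symm,
          swap_apply_of_ne_of_ne hap.symm hpq, hAp]
      rcases eq_or_ne i p' with rfl | h2'
      · rw [hXp', swap_apply_of_ne_of_ne hbp.symm hgp.symm,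
          swap_apply_of_ne_of_ne hap.symm hpq,
          swap_apply_of_ne_of_ne hbp'.symm hgp'.symm,
          swap_apply_of_ne_of_ne hap'.symm hp'q, hAp']
      rcases eq_or_ne i q with rfl | h3
      · rw [hxq, swap_apply_of_ne_of_ne hbq.symm hgq.symm, swap_apply_right, hAa]
      rcases eq_or_ne i g with rfl | h4
      · rw [hXg, swap_apply_right, swap_apply_of_ne_of_ne hba hbq, hAb]
      rcases eq_or_ne i a with rfl | h5
      · rw [hab, swap_apply_left, swap_apply_of_ne_of_ne hga hgq,
          swap_apply_of_ne_of_ne hba.symm hga.symm, swap_apply_left, hAq]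
      rcases eq_or_ne i b with rfl | h6
      · rw [hXb, swap_apply_of_ne_of_ne hba.symm hga.symm, swap_apply_left,
          swap_apply_left, swap_apply_of_ne_of_ne hga hgq, hAg]
      · obtain ⟨k1, k2, k3, k4, k5, k6⟩ := hXmem i h1 h2' h3 h4 h5 h6
        rw [swap_apply_of_ne_of_ne k6 k4, swap_apply_of_ne_of_ne k5 k3,
          swap_apply_of_ne_of_ne h6 h4, swap_apply_of_ne_of_ne h5 h3,
          hAgen i h1 h2' h3 h4 h5 h6]
    calc α₁ * X * α₁⁻¹ = (A * α₁) * α₁⁻¹ := by rw [key]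
    _ = A := by group
  set ζ : Perm α := swap p' q * swap q a * swap a g * swap g b with hζ
  have hζv : ∀ i, ζ i = swap p' q (swap q a (swap a g (swap g b i))) := fun i => rfl
  have hζp : ζ p = p := by
    rw [hζv, swap_apply_of_ne_of_ne hgp.symm hbp.symm,
      swap_apply_of_ne_of_ne hap.symm hgp.symm,
      swap_apply_of_ne_of_ne hpq hap.symm,
      swap_apply_of_ne_of_ne hp'p.symm hpq]
  have hζp' : ζ p' = q := by
    rw [hζv, swap_apply_of_ne_of_ne hgp'.symm hbp'.symm,
      swap_apply_of_ne_of_ne hap'.symm hgp'.symm,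
      swap_apply_of_ne_of_ne hp'q hap'.symm, swap_apply_left]
  have hζq : ζ q = a := by
    rw [hζv, swap_apply_of_ne_of_ne hgq.symm hbq.symm,
      swap_apply_of_ne_of_ne haq.symm hgq.symm, swap_apply_left,
      swap_apply_of_ne_of_ne hap' haq]
  have hζa : ζ a = g := by
    rw [hζv, swap_apply_of_ne_of_ne hga.symm hba.symm, swap_apply_left,
      swap_apply_of_ne_of_ne hgq hga, swap_apply_of_ne_of_ne hgp' hgq]
  have hζg : ζ g = b := by
    rw [hζv, swap_apply_left, swap_apply_of_ne_of_ne hba hgb.symm,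
      swap_apply_of_ne_of_ne hbq hba, swap_apply_of_ne_of_ne hbp' hbq]
  have hζb : ζ b = p' := by
    rw [hζv, swap_apply_right, swap_apply_right, swap_apply_right, swap_apply_right]
  have hζgen : ∀ i, i ≠ p → i ≠ p' → i ≠ q → i ≠ g → i ≠ a → i ≠ b → ζ i = i := by
    intro i h1 h2' h3 h4 h5 h6
    rw [hζv, swap_apply_of_ne_of_ne h4 h6, swap_apply_of_ne_of_ne h5 h4,
      swap_apply_of_ne_of_ne h3 h5, swap_apply_of_ne_of_ne h2' h3]
  have hEζ : ζ * X * ζ⁻¹ = B := by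
    have key : ζ * X = B * ζ := by
      apply Equiv.ext
      intro i
      have hl : (ζ * X) i = ζ (X i) := rfl
      have hr : (B * ζ) i = B (ζ i) := rfl
      rw [hl, hr]
      rcases eq_or_ne i p with rfl | h1
      · rw [hp', hζp', hζp, hBp]
      rcases eq_or_ne i p' with rfl | h2'
      · rw [hXp', hζp, hζp', hBq]
      rcases eq_or_ne i q with rfl | h3
      · rw [hxq, hζq, hBa]
      rcases eq_or_ne i g with rfl | h4
      · rw [hXg, hζg, hBb]
      rcases eq_or_ne i a with rfl | h5
      · rw [hab, hζb, hζa, hBg]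
      rcases eq_or_ne i b with rfl | h6
      · rw [hXb, hζa, hζb, hBp']
      · obtain ⟨k1, k2, k3, k4, k5, k6⟩ := hXmem i h1 h2' h3 h4 h5 h6
        rw [hζgen (X i) k1 k2 k3 k4 k5 k6, hζgen i h1 h2' h3 h4 h5 h6,
          hBgen i h1 h2' h3 h4 h5 h6]
    calc ζ * X * ζ⁻¹ = (B * ζ) * ζ⁻¹ := by rw [key]
    _ = B := by group
  set ζ' : Perm α := swap p p' * swap p' q * swap q a * swap g b with hζ'
  have hζ'v : ∀ i, ζ' i = swap p p' (swap p' q (swap q a (swap g b i))) := fun i => rfl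
  have hζ'p : ζ' p = p' := by
    rw [hζ'v, swap_apply_of_ne_of_ne hgp.symm hbp.symm,
      swap_apply_of_ne_of_ne hpq hap.symm,
      swap_apply_of_ne_of_ne hp'p.symm hpq, swap_apply_left]
  have hζ'p' : ζ' p' = q := by
    rw [hζ'v, swap_apply_of_ne_of_ne hgp'.symm hbp'.symm,
      swap_apply_of_ne_of_ne hp'q hap'.symm, swap_apply_left,
      swap_apply_of_ne_of_ne hpq.symm hp'q.symm]
  have hζ'q : ζ' q = a := by
    rw [hζ'v, swap_apply_of_ne_of_ne hgq.symm hbq.symm, swap_apply_left,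
      swap_apply_of_ne_of_ne hap' haq, swap_apply_of_ne_of_ne hap hap']
  have hζ'a : ζ' a = p := by
    rw [hζ'v, swap_apply_of_ne_of_ne hga.symm hba.symm, swap_apply_right,
      swap_apply_right, swap_apply_right]
  have hζ'g : ζ' g = b := by
    rw [hζ'v, swap_apply_left, swap_apply_of_ne_of_ne hbq hba,
      swap_apply_of_ne_of_ne hbp' hbq, swap_apply_of_ne_of_ne hbp hbp']
  have hζ'b : ζ' b = g := by
    rw [hζ'v, swap_apply_right, swap_apply_of_ne_of_ne hgq hga,
      swap_apply_of_ne_of_ne hgp' hgq, swap_apply_of_ne_of_ne hgp hgp']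
  have hζ'gen : ∀ i, i ≠ p → i ≠ p' → i ≠ q → i ≠ g → i ≠ a → i ≠ b → ζ' i = i := by
    intro i h1 h2' h3 h4 h5 h6
    rw [hζ'v, swap_apply_of_ne_of_ne h4 h6, swap_apply_of_ne_of_ne h3 h5,
      swap_apply_of_ne_of_ne h2' h3, swap_apply_of_ne_of_ne h1 h2']
  have hEζ' : ζ' * X * ζ'⁻¹ = C := by
    have key : ζ' * X = C * ζ' := by
      apply Equiv.ext
      intro i
      have hl : (ζ' * X) i = ζ' (X i) := rfl
      have hr : (C * ζ') i = C (ζ' i) := rfl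
      rw [hl, hr]
      rcases eq_or_ne i p with rfl | h1
      · rw [hp', hζ'p', hζ'p, hCp']
      rcases eq_or_ne i p' with rfl | h2'
      · rw [hXp', hζ'p, hζ'p', hCq]
      rcases eq_or_ne i q with rfl | h3
      · rw [hxq, hζ'q, hCa]
      rcases eq_or_ne i g with rfl | h4
      · rw [hXg, hζ'g, hCb]
      rcases eq_or_ne i a with rfl | h5
      · rw [hab, hζ'b, hζ'a, hCp]
      rcases eq_or_ne i b with rfl | h6
      · rw [hXb, hζ'a, hζ'b, hCg]
      · obtain ⟨k1, k2, k3, k4, k5, k6⟩ := hXmem i h1 h2' h3 h4 h5 h6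
        rw [hζ'gen (X i) k1 k2 k3 k4 k5 k6, hζ'gen i h1 h2' h3 h4 h5 h6,
          hCgen i h1 h2' h3 h4 h5 h6]
    calc ζ' * X * ζ'⁻¹ = (C * ζ') * ζ'⁻¹ := by rw [key]
    _ = C := by group
  have hneXA : X ≠ A := by
    intro h
    apply hba
    rw [← hab, h, hAa]
  have hneAB : A ≠ B := by
    intro h
    apply hp'q
    rw [← hAp, h, hBp]
  have hneBC : B ≠ C := by
    intro h
    apply hgq
    rw [← hCp, ← h, hBp]
  have hneCY : C ≠ Y := by
    intro h
    apply hgp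
    rw [← hCp, h, hYp]
  have uAm : (⟨A, memA⟩ : alternatingGroup α) ∈ Cl x :=
    isConj_of_permConj x hne h2 ⟨A, memA⟩ α₁ hEα
  have uBm : (⟨B, memB⟩ : alternatingGroup α) ∈ Cl x :=
    isConj_of_permConj x hne h2 ⟨B, memB⟩ ζ hEζ
  have uCm : (⟨C, memC⟩ : alternatingGroup α) ∈ Cl x :=
    isConj_of_permConj x hne h2 ⟨C, memC⟩ ζ' hEζ'
  have adj1 : (Gr x).Adj (vx x) ⟨⟨A, memA⟩, uAm⟩ :=
    adj_of_commute x hne h2 hneXA hxA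
  have adj2 : (Gr x).Adj ⟨⟨A, memA⟩, uAm⟩ ⟨⟨B, memB⟩, uBm⟩ :=
    adj_of_commute x hne h2 hneAB hAB
  have adj3 : (Gr x).Adj ⟨⟨B, memB⟩, uBm⟩ ⟨⟨C, memC⟩, uCm⟩ :=
    adj_of_commute x hne h2 hneBC hBC
  have adj4 : (Gr x).Adj ⟨⟨C, memC⟩, uCm⟩ (cv x hne h2 (swap p q)) :=
    adj_of_commute x hne h2 hneCY hCY
  exact adj1.reachable.trans (adj2.reachable.trans (adj3.reachable.trans adj4.reachable))


include hne h2 hs in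
lemma swap_reachable {p q : α} (hpq : p ≠ q) :
    (Gr x).Reachable (vx x) (cv x hne h2 (swap p q)) := by
  by_cases hxp : (↑x : Perm α) p = p
  · by_cases hxq : (↑x : Perm α) q = q
    · rw [conj_eq_self_of_commute x hne h2 (commute_swap_of_fixed hxp hxq)]
    · rw [Equiv.swap_comm]
      exact case3 x hne h2 hs hpq.symm hxq hxp
  · by_cases hxq : (↑x : Perm α) q = q
    · exact case3 x hne h2 hs hpq hxp hxq
    · by_cases hxpq : (↑x : Perm α) p = q
      · have hxqp : (↑x : Perm α) q = p := by rw [← hxpq, x_inv_apply x h2]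
        rw [conj_eq_self_of_commute x hne h2 (commute_swap_of_map hxpq hxqp)]
      · exact case4 x hne h2 hpq hxp hxq hxpq

include hne h2 hs in
theorem class_connected : (Gr x).Connected := by
  rw [SimpleGraph.connected_iff]
  constructor
  · intro u v
    have key : ∀ w : (Cl x : Set (alternatingGroup α)), (Gr x).Reachable (vx x) w := by
      intro w
      obtain ⟨c, hc⟩ := isConj_iff.mp w.2
      have hmem : (↑c : Perm α) ∈ Hgrp x hne h2 := by
        have htop : Hgrp x hne h2 = ⊤ := by
          rw [eq_top_iff, ← Equiv.Perm.closure_isSwap, Subgroup.closure_le]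
          rintro σ ⟨p, q, hpq, rfl⟩
          exact swap_reachable x hne h2 hs hpq
        rw [htop]; trivial
      have : cv x hne h2 (↑c) = w := by
        apply Subtype.ext; apply Subtype.ext
        show (↑c : Perm α) * ↑x * (↑c)⁻¹ = ↑↑w
        exact congrArg Subtype.val hc
      rw [← this]
      exact hmem
    exact (key u).symm.trans (key v)
  · exact ⟨vx x⟩

end Swap

section Final

variable {α : Type*} [DecidableEq α] [Fintype α]

lemma fixed_filter_card (σ : Perm α) :
    (Finset.univ.filter fun i : α => σ i = i).card + σ.support.card = Fintype.card α := by
  have h := Finset.card_filter_add_card_filter_not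
    (s := (Finset.univ : Finset α)) (p := fun i => σ i = i)
  have hs2 : Finset.univ.filter (fun i : α => ¬ σ i = i) = σ.support := by
    ext i
    simp [Equiv.Perm.mem_support]
  rw [hs2, Finset.card_univ] at h
  exact h

lemma parity_lemma (x : alternatingGroup α)
    (hx2 : orderOf x = 2)
    (hs1 : (Finset.univ.filter fun i : α => (↑x : Perm α) i = i).card = 1) :
    Fintype.card α % 4 = 1 := by
  have hx2' : orderOf (↑x : Perm α) = 2 := (Subgroup.orderOf_coe x).trans hx2
  have hall2 : ∀ c ∈ (↑x : Perm α).cycleType, c = 2 := by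
    intro c hc
    have hdvd : c ∣ 2 := by
      rw [← hx2', ← Equiv.Perm.lcm_cycleType]
      exact Multiset.dvd_lcm hc
    exact Nat.le_antisymm (Nat.le_of_dvd two_pos hdvd)
      (Equiv.Perm.two_le_of_mem_cycleType hc)
  have hrep : (↑x : Perm α).cycleType
      = Multiset.replicate (Multiset.card (↑x : Perm α).cycleType) 2 :=
    Multiset.eq_replicate_card.mpr hall2
  set k := Multiset.card (↑x : Perm α).cycleType with hk
  have hsum : (↑x : Perm α).support.card = 2 * k := by
    rw [← Equiv.Perm.sum_cycleType, hrep, Multiset.sum_replicate, smul_eq_mul, mul_comm]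
  have hsign : Equiv.Perm.sign (↑x : Perm α) = 1 := Equiv.Perm.mem_alternatingGroup.mp x.2
  have hpow : ((-1 : ℤˣ)) ^ k = 1 := by
    have h := Equiv.Perm.sign_of_cycleType (↑x : Perm α)
    rw [hsign, Equiv.Perm.sum_cycleType, ← hk, hsum] at h
    have : ((-1 : ℤˣ)) ^ (2 * k + k) = ((-1 : ℤˣ)) ^ k := by
      rw [pow_add, pow_mul]
      norm_num
    rw [this] at h
    exact h.symm
  have hkeven : Even k := by
    by_contra hodd
    rw [Nat.not_even_iff_odd] at hodd
    rw [hodd.neg_one_pow] at hpow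
    exact absurd hpow (by decide)
  have hpart := fixed_filter_card (↑x : Perm α)
  rw [hs1, hsum] at hpart
  obtain ⟨m, hm⟩ := hkeven
  omega

lemma class_disconnected (x : alternatingGroup α) (hne : (↑x : Perm α) ≠ 1)
    (h2 : (↑x : Perm α) ^ 2 = 1)
    (hs1 : (Finset.univ.filter fun i : α => (↑x : Perm α) i = i).card = 1) :
    ¬ (Gr x).Connected := by
  intro hconn
  set X : Perm α := ↑x with hX
  have hinv : ∀ i, X (X i) = i := x_inv_apply x h2
  obtain ⟨q, hq⟩ := Finset.card_eq_one.mp hs1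
  have hxq : X q = q := by
    have : q ∈ Finset.univ.filter (fun i : α => X i = i) := by
      rw [hq]; exact Finset.mem_singleton_self q
    simpa using this
  obtain ⟨a, hxa⟩ : ∃ a, X a ≠ a := by
    by_contra h
    push_neg at h
    exact hne (Equiv.ext h)
  obtain ⟨b, hab⟩ : ∃ y, X a = y := ⟨_, rfl⟩
  have hXb : X b = a := by rw [← hab, hinv]
  have hba : b ≠ a := by rw [← hab]; exact hxa
  have haq : a ≠ q := fun h => hxa (by rw [h]; exact hxq)
  have hbq : b ≠ q := fun h => hba (by rw [← hXb, h]; exact hxq.symm)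
  set c : Perm α := swap q a * swap a b with hc
  have hcmem : c ∈ alternatingGroup α := by
    rw [hc, Equiv.Perm.mem_alternatingGroup, map_mul,
      Equiv.Perm.sign_swap haq.symm, Equiv.Perm.sign_swap hba.symm]
    decide
  set y : Perm α := c * X * c⁻¹ with hy
  have memy : y ∈ alternatingGroup α := by
    rw [hy, Equiv.Perm.mem_alternatingGroup, map_mul, map_mul, map_inv,
      Equiv.Perm.mem_alternatingGroup.mp x.2]
    simp
  have hym : (⟨y, memy⟩ : alternatingGroup α) ∈ Cl x :=
    isConj_iff.mpr ⟨⟨c, hcmem⟩, Subtype.ext rfl⟩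
  have fixcount : ∀ u : alternatingGroup α, u ∈ Cl x →
      (Finset.univ.filter fun i : α => (↑u : Perm α) i = i).card = 1 := by
    intro u hu
    obtain ⟨d, hd⟩ := isConj_iff.mp hu
    have hd' : (↑d : Perm α) * X * (↑d : Perm α)⁻¹ = ↑u := congrArg Subtype.val hd
    have hsupp : (↑u : Perm α).support.card = X.support.card := by
      rw [← hd']
      exact Equiv.Perm.card_support_conj
    have e1 := fixed_filter_card (↑u : Perm α)
    have e2 := fixed_filter_card X
    rw [hsupp] at e1
    omega
  have step : ∀ u v : (Cl x : Set (alternatingGroup α)), (Gr x).Adj u v →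
      (↑↑u : Perm α) q = q → (↑↑v : Perm α) q = q := by
    intro u v huv huq
    simp only [commGraph, SimpleGraph.fromRel_adj] at huv
    obtain ⟨hne', hcuv⟩ := huv
    have hcuv' : Commute (↑↑u : Perm α) ↑↑v := by
      rcases hcuv with h | h
      · exact congrArg Subtype.val h.eq
      · exact congrArg Subtype.val h.symm.eq
    have hfix : (↑↑u : Perm α) ((↑↑v : Perm α) q) = (↑↑v : Perm α) q := by
      have h := congrArg (fun σ : Perm α => σ q) hcuv'.eq
      simp only [mul_apply] at h
      rw [huq] at h
      exact h
    obtain ⟨r, hr⟩ := Finset.card_eq_one.mp (fixcount ↑u u.2)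
    have hqr : q = r := by
      have : q ∈ Finset.univ.filter (fun i : α => (↑↑u : Perm α) i = i) := by
        simp [huq]
      rw [hr] at this
      simpa using this
    have hmem2 : (↑↑v : Perm α) q ∈ Finset.univ.filter
        (fun i : α => (↑↑u : Perm α) i = i) := by
      simp [hfix]
    rw [hr] at hmem2
    have := Finset.mem_singleton.mp hmem2
    rw [this, ← hqr]
  have main : ∀ u v : (Cl x : Set (alternatingGroup α)), (Gr x).Walk u v →
      (↑↑u : Perm α) q = q → (↑↑v : Perm α) q = q := by
    intro u v w
    induction w with
    | nil => exact id
    | cons h p ih => exact fun hq0 => ih (step _ _ h hq0)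
  obtain ⟨w⟩ := hconn.preconnected (vx x) ⟨⟨y, memy⟩, hym⟩
  have hyq : y q = q := main _ _ w hxq
  have hcb : c b = q := by
    show swap q a (swap a b b) = q
    rw [swap_apply_right, swap_apply_right]
  have hca : c a = b := by
    show swap q a (swap a b a) = b
    rw [swap_apply_left, swap_apply_of_ne_of_ne hbq hba]
  have hcinvq : c⁻¹ q = b := by rw [← hcb, ← Equiv.Perm.mul_apply, inv_mul_cancel, Equiv.Perm.one_apply]
  have hyqb : y q = b := by
    rw [hy]
    show c (X (c⁻¹ q)) = b
    rw [hcinvq, hXb, hca]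
  rw [hyq] at hyqb
  exact hbq hyqb.symm

end Final


/-- For `n ≥ 2` and an involution `x` in the alternating group `Aₙ` with
conjugacy class `𝒞` and `s` fixed points, the commuting graph on `𝒞` is
disconnected iff `n ≡ 1 (mod 4)` and `s = 1`. -/
theorem statement14 (n : ℕ) (hn : 2 ≤ n)
    (x : alternatingGroup (Fin n)) (hx : orderOf x = 2) (s : ℕ)
    (hs : s = (Finset.univ.filter fun a : Fin n =>
      (x : Equiv.Perm (Fin n)) a = a).card) :
    ¬ (commGraph {h : alternatingGroup (Fin n) | IsConj x h}).Connected ↔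
      (n % 4 = 1 ∧ s = 1) := by

  have hx1 : x ≠ 1 := by
    intro h
    rw [h, orderOf_one] at hx
    omega
  have hne : (↑x : Equiv.Perm (Fin n)) ≠ 1 := by
    intro h
    exact hx1 (Subtype.ext (by rw [h]; rfl))
  have h2' : x ^ 2 = 1 := by
    rw [← hx]
    exact pow_orderOf_eq_one x
  have h2 : (↑x : Equiv.Perm (Fin n)) ^ 2 = 1 := by
    rw [← SubmonoidClass.coe_pow, h2', OneMemClass.coe_one]
  constructor
  · intro hnc
    by_cases hs1 : s = 1
    · refine ⟨?_, hs1⟩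
      have := parity_lemma x hx (by rw [← hs]; exact hs1)
      rwa [Fintype.card_fin] at this
    · exact absurd (class_connected x hne h2
        (fun h => hs1 (by rw [hs, h]))) hnc
  · rintro ⟨h4, h1⟩
    exact class_disconnected x hne h2 (by rw [← hs]; exact h1)
end

section
/- Let p ≥ 5 be a prime. (i) If 𝒞 is a conjugacy class of elements of order p in the symmetric group S_{2p}, then the Killing graph 𝒢(S_{2p}, 𝒞) is connected, i.e., K_𝒞 is irreducible. (ii) If 𝒞 is a conjugacy class of elements of order p in the alternating group A_{2p}, then the Killing graph 𝒢(A_{2p}, 𝒞) is connected, i.e., K_𝒞 is irreducible. -/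
namespace Statement18Aux

open Equiv Equiv.Perm Finset

variable {p : ℕ}




lemma cycleType_cases (hp : p.Prime) (hp5 : 5 ≤ p) {x : Perm (Fin (2*p))}
    (hx : orderOf x = p) : x.cycleType = {p} ∨ x.cycleType = {p, p} := by
  have hall : ∀ n ∈ x.cycleType, n = p := by
    intro n hn
    have h1 : n ∣ p := by
      rw [← hx, ← Equiv.Perm.lcm_cycleType]; exact Multiset.dvd_lcm hn
    have h2 := Equiv.Perm.two_le_of_mem_cycleType hn
    rcases (Nat.Prime.eq_one_or_self_of_dvd hp n h1) with h | h
    · omega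
    · exact h
  have hrep : x.cycleType = Multiset.replicate (Multiset.card x.cycleType) p :=
    Multiset.eq_replicate_card.2 hall
  have hk1 : Multiset.card x.cycleType ≠ 0 := by
    intro h0
    rw [Multiset.card_eq_zero, Equiv.Perm.cycleType_eq_zero] at h0
    rw [h0, orderOf_one] at hx; omega
  have hsum : x.cycleType.sum = x.support.card := Equiv.Perm.sum_cycleType x
  have hle : x.support.card ≤ 2*p := by
    have := Finset.card_le_univ x.support
    simpa using this
  have hsum' : x.cycleType.sum = Multiset.card x.cycleType * p := by
    rw [hrep]; simp [Multiset.sum_replicate]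
  have hk2 : Multiset.card x.cycleType ≤ 2 := by
    by_contra hgt
    push_neg at hgt
    have : 3 * p ≤ Multiset.card x.cycleType * p := Nat.mul_le_mul_right p hgt
    omega
  interval_cases h : Multiset.card x.cycleType
  · omega
  · left; rw [hrep]; rfl
  · right; rw [hrep]; rfl

lemma orderOf_of_type {z : Perm (Fin (2*p))} (hp : p.Prime)
    (h : z.cycleType = {p} ∨ z.cycleType = {p, p}) : orderOf z = p := by
  rcases h with h | h <;>
  · rw [← Equiv.Perm.lcm_cycleType, h]
    simp [Multiset.lcm_cons, Multiset.lcm_singleton, Nat.lcm_self]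




section Double
variable (hp : p.Prime) (hp5 : 5 ≤ p) {z : Perm (Fin (2*p))}
  (hz : z.cycleType = {p, p})

include hp hp5 hz

lemma support_univ_of_double : z.support = Finset.univ := by
  apply Finset.eq_univ_of_card
  have := Equiv.Perm.sum_cycleType z
  rw [hz] at this
  simp only [Multiset.insert_eq_cons, Multiset.sum_cons, Multiset.sum_singleton] at this
  rw [Fintype.card_fin]
  omega

lemma card_cycleOf_double (w : Fin (2*p)) : (z.cycleOf w).support.card = p := by
  have hw : w ∈ z.support := by rw [support_univ_of_double hp hp5 hz]; exact Finset.mem_univ w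
  have hmem : z.cycleOf w ∈ z.cycleFactorsFinset :=
    (Equiv.Perm.cycleOf_mem_cycleFactorsFinset_iff).2 hw
  have : (z.cycleOf w).support.card ∈ z.cycleType := by
    rw [Equiv.Perm.cycleType_def]
    exact Multiset.mem_map_of_mem _ hmem
  rw [hz] at this
  simp only [Multiset.insert_eq_cons, Multiset.mem_cons, Multiset.mem_singleton, or_self] at this
  exact this

lemma pow_ne_double {k : ℕ} (hk1 : 0 < k) (hk2 : k < p) (w : Fin (2*p)) :
    (z ^ k) w ≠ w := by
  intro hcon
  have hww : z w ≠ w := by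
    rw [← Equiv.Perm.mem_support, support_univ_of_double hp hp5 hz]; exact Finset.mem_univ w
  have hcyc : (z.cycleOf w).IsCycle := Equiv.Perm.isCycle_cycleOf z hww
  have happ : ((z.cycleOf w) ^ k) w = w := by
    rw [Equiv.Perm.cycleOf_pow_apply_self]; exact hcon
  have hcw : (z.cycleOf w) w ≠ w := by
    rw [Equiv.Perm.cycleOf_apply_self]; exact hww
  have hone : (z.cycleOf w) ^ k = 1 := (hcyc.pow_eq_one_iff' hcw).2 happ
  have hdvd : orderOf (z.cycleOf w) ∣ k := orderOf_dvd_of_pow_eq_one hone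
  rw [hcyc.orderOf, card_cycleOf_double hp hp5 hz] at hdvd
  have := Nat.le_of_dvd hk1 hdvd
  omega

lemma cover_double {u v : Fin (2*p)} (huv : ¬ z.SameCycle u v) (w : Fin (2*p)) :
    z.SameCycle u w ∨ z.SameCycle v w := by
  have hsupp := support_univ_of_double hp hp5 hz
  have hzu : z u ≠ u := by rw [← Equiv.Perm.mem_support, hsupp]; exact Finset.mem_univ u
  have hzv : z v ≠ v := by rw [← Equiv.Perm.mem_support, hsupp]; exact Finset.mem_univ v
  have hdisj : Disjoint (z.cycleOf u).support (z.cycleOf v).support := by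
    rw [Finset.disjoint_left]
    intro y hyu hyv
    have h1 := (Equiv.Perm.mem_support_cycleOf_iff.1 hyu).1
    have h2 := (Equiv.Perm.mem_support_cycleOf_iff.1 hyv).1
    exact huv (h1.trans h2.symm)
  have hcard : ((z.cycleOf u).support ∪ (z.cycleOf v).support).card = 2*p := by
    rw [Finset.card_union_of_disjoint hdisj, card_cycleOf_double hp hp5 hz,
      card_cycleOf_double hp hp5 hz]
    omega
  have huniv : (z.cycleOf u).support ∪ (z.cycleOf v).support = Finset.univ := by
    apply Finset.eq_univ_of_card
    rw [hcard]; simp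
  have hw : w ∈ (z.cycleOf u).support ∪ (z.cycleOf v).support := by
    rw [huniv]; exact Finset.mem_univ w
  rcases Finset.mem_union.1 hw with h | h
  · exact Or.inl (Equiv.Perm.mem_support_cycleOf_iff.1 h).1
  · exact Or.inr (Equiv.Perm.mem_support_cycleOf_iff.1 h).1







lemma crossing_double {u v : Fin (2*p)} (huv : ¬ z.SameCycle u v) :
    (z * swap u v).IsCycle ∧ (z * swap u v).support = Finset.univ ∧
      ((z * swap u v) ^ p) u = v := by
  set h : Perm (Fin (2*p)) := z * swap u v with hh
  have hsupp : z.support = Finset.univ := support_univ_of_double hp hp5 hz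
  have hfix : ∀ w : Fin (2*p), z w ≠ w := by
    intro w; rw [← Equiv.Perm.mem_support, hsupp]; exact Finset.mem_univ w
  have huv' : u ≠ v := fun e => huv (e ▸ Equiv.Perm.SameCycle.refl z u)
  have hF5a : ∀ k : ℕ, (z ^ k) u ≠ v := by
    intro k hcon
    exact huv ⟨(k : ℤ), by rw [zpow_natCast]; exact hcon⟩
  have hF5b : ∀ k : ℕ, (z ^ k) v ≠ u := by
    intro k hcon
    exact huv (Equiv.Perm.SameCycle.symm ⟨(k : ℤ), by rw [zpow_natCast]; exact hcon⟩)
  have hp0 : 0 < p := by omega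
  have hF3 : ∀ (k : ℕ), 0 < k → k < p → ∀ w, (z ^ k) w ≠ w :=
    fun k h1 h2 w => pow_ne_double hp hp5 hz h1 h2 w
  -- apply of h
  have happ : ∀ w, h w = z (swap u v w) := fun w => Equiv.Perm.mul_apply z _ w
  have happ' : ∀ w, w ≠ u → w ≠ v → h w = z w := by
    intro w h1 h2; rw [happ, swap_apply_of_ne_of_ne h1 h2]
  have hhu : h u = z v := by rw [happ, swap_apply_left]
  have hhv : h v = z u := by rw [happ, swap_apply_right]
  -- key chain 1
  have key1 : ∀ k : ℕ, 1 ≤ k → k ≤ p - 1 → (h ^ k) u = (z ^ k) v := by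
    intro k
    induction k with
    | zero => omega
    | succ n ih =>
      intro _ hle
      rcases Nat.eq_zero_or_pos n with he | hlt
      · subst he; simpa using hhu
      · have hn1 : 1 ≤ n := by omega
        have hn2 : n ≤ p - 1 := by omega
        have hn3 : n < p := by omega
        rw [pow_succ' h n, Equiv.Perm.mul_apply, ih hn1 hn2,
          happ' _ (fun e => hF5b n e) (fun e => hF3 n hn1 hn3 v e),
          ← Equiv.Perm.mul_apply, ← pow_succ']
  -- h^p u = v
  have key2 : (h ^ p) u = v := by
    have hp1 : (p - 1) + 1 = p := by omega
    have h1 : (h ^ (p-1)) u = (z ^ (p-1)) v := key1 (p-1) (by omega) le_rfl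
    have : (h ^ p) u = h ((h ^ (p-1)) u) := by
      rw [← Equiv.Perm.mul_apply, ← pow_succ', hp1]
    have hzp : z ^ p = 1 := by
      have h2 := pow_orderOf_eq_one z
      rwa [orderOf_of_type hp (Or.inr hz)] at h2
    rw [this, h1, happ' _ (fun e => hF5b _ e) (fun e => hF3 (p-1) (by omega) (by omega) v e),
      ← Equiv.Perm.mul_apply, ← pow_succ', hp1, hzp, Equiv.Perm.one_apply]
  -- key chain 3
  have key3 : ∀ k : ℕ, 1 ≤ k → k ≤ p - 1 → (h ^ (p + k)) u = (z ^ k) u := by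
    intro k
    induction k with
    | zero => omega
    | succ n ih =>
      intro _ hle
      rcases Nat.eq_zero_or_pos n with he | hlt
      · subst he
        have : (h ^ (p + 1)) u = h ((h ^ p) u) := by
          rw [← Equiv.Perm.mul_apply, ← pow_succ']
        rw [this, key2, hhv, pow_one]
      · have hn1 : 1 ≤ n := by omega
        have hn2 : n ≤ p - 1 := by omega
        have hn3 : n < p := by omega
        have : (h ^ (p + (n+1))) u = h ((h ^ (p + n)) u) := by
          rw [← Equiv.Perm.mul_apply, ← pow_succ', Nat.add_succ]
        rw [this, ih hn1 hn2,
          happ' _ (fun e => hF3 n hn1 hn3 u e) (fun e => hF5a n e),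
          ← Equiv.Perm.mul_apply, ← pow_succ']
  -- fixed point free
  have hfpf : ∀ w, h w ≠ w := by
    intro w
    rcases eq_or_ne w u with rfl | hwu
    · rw [hhu]; intro e; exact hF5b 1 (by simpa using e)
    · rcases eq_or_ne w v with rfl | hwv
      · rw [hhv]; intro e; exact hF5a 1 (by simpa using e)
      · rw [happ' w hwu hwv]; exact hfix w
  have hsupph : h.support = Finset.univ :=
    Finset.eq_univ_of_forall (fun w => Equiv.Perm.mem_support.2 (hfpf w))
  -- IsCycle
  have horder : orderOf z = p := orderOf_of_type hp (Or.inr hz)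
  have hcyc : h.IsCycle := by
    refine ⟨u, hfpf u, ?_⟩
    intro y _
    rcases cover_double hp hp5 hz huv y with hcov | hcov
    · obtain ⟨i, hi, hiy⟩ := hcov.exists_pow_eq'
      rw [horder] at hi
      rcases Nat.eq_zero_or_pos i with rfl | hipos
      · rw [pow_zero, Equiv.Perm.one_apply] at hiy
        exact hiy ▸ Equiv.Perm.SameCycle.refl h u
      · refine ⟨((p + i : ℕ) : ℤ), ?_⟩
        rw [zpow_natCast, key3 i hipos (by omega)]
        exact hiy
    · obtain ⟨i, hi, hiy⟩ := hcov.exists_pow_eq'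
      rw [horder] at hi
      rcases Nat.eq_zero_or_pos i with rfl | hipos
      · rw [pow_zero, Equiv.Perm.one_apply] at hiy
        exact ⟨((p : ℕ) : ℤ), by rw [zpow_natCast, key2]; exact hiy⟩
      · refine ⟨((i : ℕ) : ℤ), ?_⟩
        rw [zpow_natCast, key1 i hipos (by omega)]
        exact hiy
  exact ⟨hcyc, hsupph, key2⟩



end Double




lemma sq_double (hp : p.Prime) (hp5 : 5 ≤ p) {h : Perm (Fin (2*p))}
    (hc : h.IsCycle) (hs : h.support = Finset.univ) : (h * h).cycleType = {p, p} := by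
  have horder : orderOf h = 2*p := by
    rw [hc.orderOf, hs, Finset.card_univ, Fintype.card_fin]
  have hsq : h * h = h ^ 2 := (sq h).symm
  have horder2 : orderOf (h * h) = p := by
    rw [hsq, orderOf_pow, horder]
    have : Nat.gcd (2*p) 2 = 2 := Nat.gcd_eq_right ⟨p, rfl⟩
    rw [this]
    omega
  have hfpf : ∀ w, (h * h) w ≠ w := by
    intro w hcon
    have hw : h w ≠ w := by
      rw [← Equiv.Perm.mem_support, hs]; exact Finset.mem_univ w
    rw [hsq] at hcon
    have hone : h ^ 2 = 1 := (hc.pow_eq_one_iff' hw).2 hcon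
    have := orderOf_dvd_of_pow_eq_one hone
    rw [horder] at this
    have := Nat.le_of_dvd (by omega) this
    omega
  rcases cycleType_cases hp hp5 horder2 with hct | hct
  · exfalso
    have hsum := Equiv.Perm.sum_cycleType (h * h)
    have hsupp : (h*h).support = Finset.univ :=
      Finset.eq_univ_of_forall (fun w => Equiv.Perm.mem_support.2 (hfpf w))
    rw [hct, hsupp, Finset.card_univ, Fintype.card_fin] at hsum
    simp at hsum
    omega
  · exact hct

lemma exists_pcycle_commute (hp : p.Prime) (hp5 : 5 ≤ p) {g : Perm (Fin (2*p))}
    (hg : g.support.card ≤ p) :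
    ∃ c : Perm (Fin (2*p)), c.cycleType = {p} ∧ Equiv.Perm.sign c = 1 ∧ Commute c g := by
  have hcompl : p ≤ g.supportᶜ.card := by
    rw [Finset.card_compl, Fintype.card_fin]
    omega
  obtain ⟨T, hTsub, hTcard⟩ := Finset.exists_subset_card_eq hcompl
  set l := T.sort (· ≤ ·) with hl
  have hnodup : l.Nodup := Finset.sort_nodup T _
  have hlen : l.length = p := by rw [hl, Finset.length_sort, hTcard]
  have hne : ∀ x : Fin (2*p), l ≠ [x] := by
    intro x hx
    rw [hx] at hlen; simp at hlen; omega
  have hcyc : (l.formPerm).IsCycle := List.isCycle_formPerm hnodup (by omega)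
  have hsupp : (l.formPerm).support = T := by
    rw [List.support_formPerm_of_nodup l hnodup hne, hl, Finset.sort_toFinset]
  refine ⟨l.formPerm, ?_, ?_, ?_⟩
  · rw [hcyc.cycleType, hsupp, hTcard]
  · rw [hcyc.sign, hsupp, hTcard]
    have hodd : Odd p := hp.odd_of_ne_two (by omega)
    rw [hodd.neg_one_pow, neg_neg]
  · have hdisj : _root_.Disjoint (l.formPerm).support g.support := by
      rw [hsupp]
      exact Finset.disjoint_left.2 (fun a ha => by
        have := hTsub ha; simpa [Finset.mem_compl] using this)
    exact (Equiv.Perm.disjoint_iff_disjoint_support.2 hdisj).commute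




lemma exists_notSameCycle (hp : p.Prime) (hp5 : 5 ≤ p) {z : Perm (Fin (2*p))}
    (hz : z.cycleType = {p, p}) (u : Fin (2*p)) : ∃ v, ¬ z.SameCycle u v := by
  have hcard : (z.cycleOf u).support.card = p := card_cycleOf_double hp hp5 hz u
  have : ((z.cycleOf u).support)ᶜ.Nonempty := by
    rw [← Finset.card_pos, Finset.card_compl, hcard, Fintype.card_fin]
    omega
  obtain ⟨v, hv⟩ := this
  refine ⟨v, fun hsc => ?_⟩
  rw [Finset.mem_compl] at hv
  apply hv
  rw [Equiv.Perm.mem_support_cycleOf_iff]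
  refine ⟨hsc, ?_⟩
  rw [support_univ_of_double hp hp5 hz]; exact Finset.mem_univ u

lemma sign_double (hp : p.Prime) (hp5 : 5 ≤ p) {z : Perm (Fin (2*p))}
    (hz : z.cycleType = {p, p}) : Equiv.Perm.sign z = 1 := by
  rw [Equiv.Perm.sign_of_cycleType, hz]
  simp only [Multiset.insert_eq_cons, Multiset.sum_cons, Multiset.sum_singleton,
    Multiset.card_cons, Multiset.card_singleton]
  have : p + p + 2 = 2*(p+1) := by ring
  rw [this, pow_mul]
  simp

lemma sign_single (hp : p.Prime) (hp5 : 5 ≤ p) {z : Perm (Fin (2*p))}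
    (hz : z.cycleType = {p}) : Equiv.Perm.sign z = 1 := by
  rw [Equiv.Perm.sign_of_cycleType, hz]
  simp only [Multiset.sum_singleton, Multiset.card_singleton]
  have hodd : Odd p := hp.odd_of_ne_two (by omega)
  have : Even (p + 1) := Odd.add_one hodd
  exact (Even.neg_one_pow this)

-- odd element commuting with z
lemma exists_odd_commute (hp : p.Prime) (hp5 : 5 ≤ p) {x : Perm (Fin (2*p))}
    (ht : x.cycleType = {p} ∨ x.cycleType = {p, p}) :
    ∃ δ : Perm (Fin (2*p)), Equiv.Perm.sign δ = -1 ∧ δ * x * δ⁻¹ = x := by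
  rcases ht with ht | ht
  · -- single p-cycle : swap two fixed points
    have hcard : x.support.card = p := by
      have := Equiv.Perm.sum_cycleType x
      rw [ht] at this; simpa using this.symm
    have h2 : 1 < (x.supportᶜ).card := by
      rw [Finset.card_compl, Fintype.card_fin, hcard]; omega
    obtain ⟨a, ha, b, hb, hab⟩ := Finset.one_lt_card.1 h2
    refine ⟨swap a b, Equiv.Perm.sign_swap hab, ?_⟩
    have hdisj : _root_.Disjoint (swap a b).support x.support := by
      rw [Equiv.Perm.support_swap hab]
      rw [Finset.disjoint_left]
      intro y hy
      rcases Finset.mem_insert.1 hy with rfl | hy'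
      · simpa [Finset.mem_compl] using ha
      · rw [Finset.mem_singleton] at hy'; subst hy'
        simpa [Finset.mem_compl] using hb
    have hcomm : Commute (swap a b) x :=
      (Equiv.Perm.disjoint_iff_disjoint_support.2 hdisj).commute
    rw [hcomm.eq, mul_inv_cancel_right]
  · -- double : δ = (x * swap u v)^p
    have hne : (0:ℕ) < 2*p := by omega
    set u : Fin (2*p) := ⟨0, hne⟩
    obtain ⟨v, huv⟩ := exists_notSameCycle hp hp5 ht u
    obtain ⟨hcyc, hsupp, hpow⟩ := crossing_double hp hp5 ht huv
    set h0 := x * swap u v with hh0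
    have horder : orderOf h0 = 2*p := by
      rw [hcyc.orderOf, hsupp, Finset.card_univ, Fintype.card_fin]
    have huv' : u ≠ v := fun e => huv (e ▸ Equiv.Perm.SameCycle.refl x u)
    have hvu : (h0 ^ p) v = u := by
      have h2p : (h0 ^ (p + p)) u = u := by
        have : p + p = 2*p := by ring
        have h1 := pow_orderOf_eq_one h0
        rw [horder] at h1
        rw [this, h1, Equiv.Perm.one_apply]
      calc (h0 ^ p) v = (h0 ^ p) ((h0 ^ p) u) := by rw [hpow]
        _ = (h0 ^ (p + p)) u := by rw [← Equiv.Perm.mul_apply, ← pow_add]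
        _ = u := h2p
    refine ⟨h0 ^ p, ?_, ?_⟩
    · rw [map_pow]
      have : Equiv.Perm.sign h0 = -1 := by
        rw [hh0, map_mul, sign_double hp hp5 ht, Equiv.Perm.sign_swap huv', one_mul]
      rw [this]
      exact (hp.odd_of_ne_two (by omega)).neg_one_pow
    · have hx : x = h0 * swap u v := by
        rw [hh0, mul_assoc, Equiv.swap_mul_self, mul_one]
      have hconjswap : (h0 ^ p) * swap u v * (h0 ^ p)⁻¹ = swap u v := by
        rw [← Equiv.swap_apply_apply, hpow, hvu, Equiv.swap_comm]
      calc (h0 ^ p) * x * (h0 ^ p)⁻¹ = (h0 ^ p) * (h0 * swap u v) * (h0 ^ p)⁻¹ := by rw [← hx]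
        _ = h0 * ((h0 ^ p) * swap u v * (h0 ^ p)⁻¹) := by
            simp only [← mul_assoc]
            rw [pow_mul_comm' h0 p]
        _ = h0 * swap u v := by rw [hconjswap]
        _ = x := hx.symm





section PartS

variable (hp : p.Prime) (hp5 : 5 ≤ p) (x : Perm (Fin (2*p))) (hx : orderOf x = p)

include hp hp5 hx in
theorem partS : (killingGraph {h : Perm (Fin (2*p)) | IsConj x h}).Connected := by
  set C : Set (Perm (Fin (2*p))) := {h | IsConj x h} with hC
  have memC : ∀ h, h ∈ C ↔ h.cycleType = x.cycleType := by
    intro h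
    constructor
    · intro hc
      exact (Equiv.Perm.isConj_iff_cycleType_eq.1 hc).symm
    · intro e
      exact Equiv.Perm.isConj_iff_cycleType_eq.2 e.symm
  have ht := cycleType_cases hp hp5 hx
  set κ := killingGraph C with hκ
  -- generic reach helper
  have reach_eq : ∀ (u v : C), (u : Perm (Fin (2*p))) = v → κ.Reachable u v := by
    intro u v h
    have : u = v := Subtype.ext h
    rw [this]
  have edge : ∀ (z b : Perm (Fin (2*p))) (hz : z ∈ C) (hb : b ∈ C),
      (∃ c ∈ C, Commute c (z * b)) → κ.Reachable ⟨z, hz⟩ ⟨b, hb⟩ := by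
    intro z b hz hb hcert
    rcases eq_or_ne z b with rfl | hne
    · exact reach_eq _ _ rfl
    · refine SimpleGraph.Adj.reachable ?_
      have hadj : (killingGraph C).Adj ⟨z, hz⟩ ⟨b, hb⟩ := by
        unfold killingGraph
        rw [SimpleGraph.fromRel_adj]
        exact ⟨fun e => hne (congrArg Subtype.val e), Or.inl hcert⟩
      exact hadj
  have conjmem : ∀ (g z : Perm (Fin (2*p))), z ∈ C → g * z * g⁻¹ ∈ C := by
    intro g z hz
    rw [memC] at hz ⊢
    rw [Equiv.Perm.cycleType_conj]; exact hz
  -- R-step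
  have rstep : ∀ (z : Perm (Fin (2*p))) (hz : z ∈ C) (a b : Fin (2*p)),
      κ.Reachable ⟨z, hz⟩ ⟨swap a b * z * (swap a b)⁻¹, conjmem _ _ hz⟩ := by
    intro z hz a b
    rcases ht with htyp | htyp
    · -- single p-cycle class
      have hzt : z.cycleType = {p} := by rw [memC] at hz; rw [hz, htyp]
      have hinv : z⁻¹ ∈ C := by
        rw [memC, Equiv.Perm.cycleType_inv]; rw [memC] at hz; exact hz
      have cert1 : ∃ c ∈ C, Commute c (z * z⁻¹) := by
        obtain ⟨c, hct, _, hcc⟩ := exists_pcycle_commute hp hp5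
          (g := z * z⁻¹) (by simp)
        exact ⟨c, (memC c).2 (by rw [hct, htyp]), hcc⟩
      have hswapcard : ∀ (c d : Fin (2*p)), (swap c d).support.card ≤ 2 := by
        intro c d
        rcases eq_or_ne c d with rfl | hcd
        · simp [Equiv.swap_self]
        · rw [Equiv.Perm.support_swap hcd]
          exact (Finset.card_insert_le _ _).trans (by simp)
      have cert2 : ∃ c ∈ C, Commute c (z⁻¹ * (swap a b * z * (swap a b)⁻¹)) := by
        have hrw : z⁻¹ * (swap a b * z * (swap a b)⁻¹) =
            swap (z⁻¹ a) (z⁻¹ b) * (swap a b)⁻¹ := by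
          rw [Equiv.swap_apply_apply z⁻¹ a b, inv_inv]
          simp only [mul_assoc]
        obtain ⟨c, hct, _, hcc⟩ := exists_pcycle_commute hp hp5
          (g := z⁻¹ * (swap a b * z * (swap a b)⁻¹)) (by
            rw [hrw]
            refine le_trans (Finset.card_le_card (Equiv.Perm.support_mul_le _ _)) ?_
            refine le_trans (Finset.card_union_le _ _) ?_
            have h1 := hswapcard (z⁻¹ a) (z⁻¹ b)
            have h2 := hswapcard a b
            rw [Equiv.swap_inv]
            omega)
        exact ⟨c, (memC c).2 (by rw [hct, htyp]), hcc⟩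
      exact (edge z z⁻¹ hz hinv cert1).trans
        (edge z⁻¹ _ hinv (conjmem _ _ hz) cert2)
    · -- double p-cycle class
      have hzt : z.cycleType = {p, p} := by rw [memC] at hz; rw [hz, htyp]
      -- a single crossing edge
      have cross : ∀ (w : Perm (Fin (2*p))) (hw : w ∈ C) (u v : Fin (2*p)),
          ¬ w.SameCycle u v →
          κ.Reachable ⟨w, hw⟩ ⟨swap u v * w * (swap u v)⁻¹, conjmem _ _ hw⟩ := by
        intro w hw u v huv
        have hwt : w.cycleType = {p, p} := by rw [memC] at hw; rw [hw, htyp]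
        obtain ⟨hcyc, hsupp, _⟩ := crossing_double hp hp5 hwt huv
        refine edge _ _ hw (conjmem _ _ hw) ?_
        have hprod : w * (swap u v * w * (swap u v)⁻¹) = (w * swap u v) * (w * swap u v) := by
          rw [Equiv.swap_inv]
          simp only [mul_assoc]
        refine ⟨w * (swap u v * w * (swap u v)⁻¹), ?_, Commute.refl _⟩
        rw [memC, hprod, htyp]
        exact sq_double hp hp5 hcyc hsupp
      rcases eq_or_ne a b with rfl | hab
      · refine reach_eq _ _ ?_
        simp [Equiv.swap_self, Equiv.Perm.refl_mul, Equiv.Perm.refl_inv]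
      by_cases hsc : z.SameCycle a b
      · -- three crossing steps
        obtain ⟨w1, hw1⟩ := exists_notSameCycle hp hp5 hzt a
        have hbw1 : b ≠ w1 := fun e => hw1 (e ▸ hsc)
        have haw1 : a ≠ w1 := fun e => hw1 (e ▸ Equiv.Perm.SameCycle.refl z a)
        have conj2 : ∀ (g h w : Perm (Fin (2*p))),
            g * (h * w * h⁻¹) * g⁻¹ = (g*h) * w * (g*h)⁻¹ := by
          intros g h w; simp [mul_inv_rev, mul_assoc]
        have hz1m : swap a w1 * z * (swap a w1)⁻¹ ∈ C := conjmem _ _ hz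
        have hz2m : swap b a * (swap a w1 * z * (swap a w1)⁻¹) * (swap b a)⁻¹ ∈ C :=
          conjmem _ _ hz1m
        have r1 := cross z hz a w1 hw1
        have hnsc2 : ¬ (swap a w1 * z * (swap a w1)⁻¹).SameCycle b a := by
          rw [Equiv.Perm.sameCycle_conj, show (swap a w1)⁻¹ = swap a w1 from Equiv.swap_inv _ _,
            swap_apply_of_ne_of_ne hab.symm hbw1, swap_apply_left]
          intro h; exact hw1 (hsc.trans h)
        have r2 := cross _ hz1m b a hnsc2
        have hnsc3 : ¬ (swap b a * (swap a w1 * z * (swap a w1)⁻¹) * (swap b a)⁻¹).SameCycle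
            b w1 := by
          rw [Equiv.Perm.sameCycle_conj, show (swap b a)⁻¹ = swap b a from Equiv.swap_inv _ _,
            swap_apply_left, swap_apply_of_ne_of_ne (Ne.symm hbw1) (Ne.symm haw1),
            Equiv.Perm.sameCycle_conj, show (swap a w1)⁻¹ = swap a w1 from Equiv.swap_inv _ _,
            swap_apply_left, swap_apply_right]
          intro h; exact hw1 h.symm
        have r3 := cross _ hz2m b w1 hnsc3
        have hprod : swap b w1 * (swap b a * swap a w1) = swap a b := by
          ext w
          simp only [Equiv.Perm.mul_apply]
          rcases eq_or_ne w a with rfl | hwa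
          · rw [swap_apply_left, swap_apply_of_ne_of_ne (Ne.symm hbw1) (Ne.symm haw1),
              swap_apply_right, swap_apply_left]
          rcases eq_or_ne w b with rfl | hwb
          · rw [swap_apply_of_ne_of_ne (Ne.symm hab) hbw1, swap_apply_left,
              swap_apply_of_ne_of_ne hab haw1, swap_apply_right]
          rcases eq_or_ne w w1 with rfl | hww1
          · rw [swap_apply_right, swap_apply_right, swap_apply_left,
              swap_apply_of_ne_of_ne (Ne.symm haw1) (Ne.symm hbw1)]
          · rw [swap_apply_of_ne_of_ne hwa hww1, swap_apply_of_ne_of_ne hwb hwa,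
              swap_apply_of_ne_of_ne hwb hww1, swap_apply_of_ne_of_ne hwa hwb]
        have hfinal : swap b w1 * (swap b a * (swap a w1 * z * (swap a w1)⁻¹) * (swap b a)⁻¹) *
            (swap b w1)⁻¹ = swap a b * z * (swap a b)⁻¹ := by
          rw [conj2, conj2, mul_assoc (swap b w1) (swap b a) (swap a w1), hprod]
        refine (r1.trans (r2.trans (r3.trans ?_)))
        exact reach_eq _ _ hfinal
      · -- direct crossing edge
        exact cross z hz a b hsc
  -- conjugation induction
  have mx : x ∈ C := by rw [memC]
  have main : ∀ g : Perm (Fin (2*p)),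
      κ.Reachable ⟨x, mx⟩ ⟨g * x * g⁻¹, conjmem g x mx⟩ := by
    intro g
    refine Equiv.Perm.swap_induction_on g ?_ ?_
    · refine reach_eq _ _ ?_
      simp
    · intro f a b hab ih
      refine ih.trans ?_
      have := rstep (f * x * f⁻¹) (conjmem f x mx) a b
      refine this.trans (reach_eq _ _ ?_)
      simp only [mul_inv_rev, mul_assoc]
  -- preconnected
  rw [SimpleGraph.connected_iff]
  refine ⟨?_, ⟨⟨x, mx⟩⟩⟩
  intro u v
  have reach_from_x : ∀ (w : C), κ.Reachable ⟨x, mx⟩ w := by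
    intro ⟨h, hh⟩
    have hconj : IsConj x h := hh
    obtain ⟨c, hc⟩ := isConj_iff.1 hconj
    exact (main c).trans (reach_eq _ _ hc)
  exact (reach_from_x u).symm.trans (reach_from_x v)

end PartS





lemma isConj_even (hp : p.Prime) (hp5 : 5 ≤ p) {x h : Perm (Fin (2*p))}
    (ht : x.cycleType = {p} ∨ x.cycleType = {p, p}) (he : h.cycleType = x.cycleType) :
    ∃ g : Perm (Fin (2*p)), Equiv.Perm.sign g = 1 ∧ g * x * g⁻¹ = h := by
  have hconj : IsConj x h := Equiv.Perm.isConj_iff_cycleType_eq.2 he.symm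
  obtain ⟨g0, hg0⟩ := isConj_iff.1 hconj
  rcases Int.units_eq_one_or (Equiv.Perm.sign g0) with hs | hs
  · exact ⟨g0, hs, hg0⟩
  · obtain ⟨δ, hδs, hδc⟩ := exists_odd_commute hp hp5 ht
    refine ⟨g0 * δ, ?_, ?_⟩
    · rw [map_mul, hs, hδs]; norm_num
    · rw [mul_inv_rev]
      calc g0 * δ * x * (δ⁻¹ * g0⁻¹) = g0 * (δ * x * δ⁻¹) * g0⁻¹ := by
            simp only [mul_assoc]
        _ = h := by rw [hδc]; exact hg0

section PartA

variable (hp : p.Prime) (hp5 : 5 ≤ p) (x : alternatingGroup (Fin (2*p)))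
  (hx : orderOf x = p)

include hp hp5 hx in
theorem partA :
    (killingGraph {h : alternatingGroup (Fin (2*p)) | IsConj x h}).Connected := by
  have hxp : orderOf (x : Perm (Fin (2*p))) = p := by
    have h2 := orderOf_injective (alternatingGroup (Fin (2*p))).subtype
      Subtype.coe_injective x
    rw [← h2] at hx
    exact hx
  have ht := cycleType_cases hp hp5 hxp
  set C : Set (alternatingGroup (Fin (2*p))) := {h | IsConj x h} with hC
  have memC : ∀ h : (alternatingGroup (Fin (2*p))), h ∈ C ↔
      (h : Perm (Fin (2*p))).cycleType = (x : Perm (Fin (2*p))).cycleType := by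
    intro h
    constructor
    · intro hc
      obtain ⟨c, hc⟩ := isConj_iff.1 hc
      have hcoe : ((c * x * c⁻¹ : (alternatingGroup (Fin (2*p)))) : Perm (Fin (2*p))) = (h : Perm (Fin (2*p))) := by
        rw [hc]
      push_cast at hcoe
      rw [← hcoe, Equiv.Perm.cycleType_conj]
    · intro he
      obtain ⟨g, hgs, hgc⟩ := isConj_even hp hp5 ht he
      refine isConj_iff.2 ⟨⟨g, Equiv.Perm.mem_alternatingGroup.2 hgs⟩, ?_⟩
      apply Subtype.ext
      push_cast
      exact hgc
  set κ := killingGraph C with hκ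
  have reach_eq : ∀ (u v : C), (u : (alternatingGroup (Fin (2*p)))) = v → κ.Reachable u v := by
    intro u v h
    have : u = v := Subtype.ext h
    rw [this]
  have memA : ∀ (g : Perm (Fin (2*p))) (z : (alternatingGroup (Fin (2*p)))),
      (g * (z : Perm (Fin (2*p))) * g⁻¹) ∈ alternatingGroup (Fin (2*p)) := by
    intro g z
    rw [Equiv.Perm.mem_alternatingGroup]
    have hz := Equiv.Perm.mem_alternatingGroup.1 z.2
    rw [map_mul, map_mul, map_inv, hz]
    simp [mul_comm]
  have edge : ∀ (z b : (alternatingGroup (Fin (2*p)))) (hz : z ∈ C) (hb : b ∈ C) (c : Perm (Fin (2*p)))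
      (hcs : Equiv.Perm.sign c = 1)
      (hct : c.cycleType = (x : Perm (Fin (2*p))).cycleType)
      (hcc : Commute c ((z : Perm (Fin (2*p))) * (b : Perm (Fin (2*p))))),
      κ.Reachable ⟨z, hz⟩ ⟨b, hb⟩ := by
    intro z b hz hb c hcs hct hcc
    rcases eq_or_ne z b with rfl | hne
    · exact reach_eq _ _ rfl
    · refine SimpleGraph.Adj.reachable ?_
      have hadj : (killingGraph C).Adj ⟨z, hz⟩ ⟨b, hb⟩ := by
        unfold killingGraph
        rw [SimpleGraph.fromRel_adj]
        refine ⟨fun e => hne (congrArg Subtype.val e), Or.inl ?_⟩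
        refine ⟨⟨c, Equiv.Perm.mem_alternatingGroup.2 hcs⟩, (memC _).2 hct, ?_⟩
        show _ * _ = _ * _
        apply Subtype.ext
        push_cast
        exact hcc
      exact hadj
  have conjmem : ∀ (g : Perm (Fin (2*p))) (z : (alternatingGroup (Fin (2*p)))), z ∈ C →
      (⟨g * (z : Perm (Fin (2*p))) * g⁻¹, memA g z⟩ : (alternatingGroup (Fin (2*p)))) ∈ C := by
    intro g z hz
    rw [memC] at hz ⊢
    show (g * (z : Perm (Fin (2*p))) * g⁻¹).cycleType = _
    rw [Equiv.Perm.cycleType_conj]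
    exact hz
  -- R-step
  have rstep : ∀ (z : (alternatingGroup (Fin (2*p)))) (hz : z ∈ C) (a b : Fin (2*p)),
      κ.Reachable ⟨z, hz⟩ ⟨⟨swap a b * (z : Perm (Fin (2*p))) * (swap a b)⁻¹,
        memA (swap a b) z⟩, conjmem (swap a b) z hz⟩ := by
    intro z hz a b
    rcases ht with htyp | htyp
    · -- single class
      have hzt : (z : Perm (Fin (2*p))).cycleType = {p} := by
        rw [memC] at hz; rw [hz, htyp]
      have hinv : z⁻¹ ∈ C := by
        rw [memC]
        have : ((z⁻¹ : (alternatingGroup (Fin (2*p)))) : Perm (Fin (2*p))) = ((z : Perm (Fin (2*p))))⁻¹ := rfl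
        rw [this, Equiv.Perm.cycleType_inv]
        rw [memC] at hz; exact hz
      have hswapcard : ∀ (c d : Fin (2*p)), (swap c d).support.card ≤ 2 := by
        intro c d
        rcases eq_or_ne c d with rfl | hcd
        · simp [Equiv.swap_self]
        · rw [Equiv.Perm.support_swap hcd]
          exact (Finset.card_insert_le _ _).trans (by simp)
      obtain ⟨c1, hc1t, hc1s, hc1c⟩ := exists_pcycle_commute hp hp5
        (g := (z : Perm (Fin (2*p))) * ((z : Perm (Fin (2*p))))⁻¹) (by simp)
      have r1 : κ.Reachable ⟨z, hz⟩ ⟨z⁻¹, hinv⟩ := by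
        refine edge z z⁻¹ hz hinv c1 hc1s (by rw [hc1t, htyp]) ?_
        have : ((z⁻¹ : (alternatingGroup (Fin (2*p)))) : Perm (Fin (2*p))) = ((z : Perm (Fin (2*p))))⁻¹ := rfl
        rw [this]
        exact hc1c
      obtain ⟨c2, hc2t, hc2s, hc2c⟩ := exists_pcycle_commute hp hp5
        (g := ((z : Perm (Fin (2*p))))⁻¹ *
          (swap a b * (z : Perm (Fin (2*p))) * (swap a b)⁻¹)) (by
          have hrw : ((z : Perm (Fin (2*p))))⁻¹ *
              (swap a b * (z : Perm (Fin (2*p))) * (swap a b)⁻¹) =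
              swap (((z : Perm (Fin (2*p))))⁻¹ a) (((z : Perm (Fin (2*p))))⁻¹ b) *
                (swap a b)⁻¹ := by
            rw [Equiv.swap_apply_apply ((z : Perm (Fin (2*p))))⁻¹ a b, inv_inv]
            simp only [mul_assoc]
          rw [hrw]
          refine le_trans (Finset.card_le_card (Equiv.Perm.support_mul_le _ _)) ?_
          refine le_trans (Finset.card_union_le _ _) ?_
          have h1 := hswapcard (((z : Perm (Fin (2*p))))⁻¹ a) (((z : Perm (Fin (2*p))))⁻¹ b)
          have h2 := hswapcard a b
          rw [Equiv.swap_inv]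
          omega)
      have r2 : κ.Reachable ⟨z⁻¹, hinv⟩ ⟨⟨swap a b * (z : Perm (Fin (2*p))) * (swap a b)⁻¹,
          memA (swap a b) z⟩, conjmem (swap a b) z hz⟩ := by
        refine edge z⁻¹ _ hinv _ c2 hc2s (by rw [hc2t, htyp]) ?_
        exact hc2c
      exact r1.trans r2
    · -- double class
      have hzt : (z : Perm (Fin (2*p))).cycleType = {p, p} := by
        rw [memC] at hz; rw [hz, htyp]
      have cross : ∀ (w : (alternatingGroup (Fin (2*p)))) (hw : w ∈ C) (u v : Fin (2*p)),
          ¬ (w : Perm (Fin (2*p))).SameCycle u v →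
          κ.Reachable ⟨w, hw⟩ ⟨⟨swap u v * (w : Perm (Fin (2*p))) * (swap u v)⁻¹,
            memA (swap u v) w⟩, conjmem (swap u v) w hw⟩ := by
        intro w hw u v huv
        have hwt : (w : Perm (Fin (2*p))).cycleType = {p, p} := by
          rw [memC] at hw; rw [hw, htyp]
        obtain ⟨hcyc, hsupp, _⟩ := crossing_double hp hp5 hwt huv
        set wP := (w : Perm (Fin (2*p))) with hwP
        have hprod : wP * (swap u v * wP * (swap u v)⁻¹) = (wP * swap u v) * (wP * swap u v) := by
          rw [Equiv.swap_inv]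
          simp only [mul_assoc]
        refine edge _ _ hw (conjmem (swap u v) w hw) (wP * (swap u v * wP * (swap u v)⁻¹)) ?_ ?_ ?_
        · rw [hprod, map_mul]
          rcases Int.units_eq_one_or (Equiv.Perm.sign (wP * swap u v)) with hs | hs <;>
            rw [hs] <;> norm_num
        · rw [hprod, htyp]
          exact sq_double hp hp5 hcyc hsupp
        · show Commute _ (wP * _)
          exact Commute.refl _
      rcases eq_or_ne a b with rfl | hab
      · refine reach_eq _ _ ?_
        apply Subtype.ext
        show (z : Perm (Fin (2*p))) = swap a a * (z : Perm (Fin (2*p))) * (swap a a)⁻¹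
        simp [Equiv.swap_self, Equiv.Perm.refl_mul, Equiv.Perm.refl_inv]
      by_cases hsc : (z : Perm (Fin (2*p))).SameCycle a b
      · obtain ⟨w1, hw1⟩ := exists_notSameCycle hp hp5 hzt a
        have hbw1 : b ≠ w1 := fun e => hw1 (e ▸ hsc)
        have haw1 : a ≠ w1 := fun e => hw1 (e ▸ Equiv.Perm.SameCycle.refl _ a)
        set zP := (z : Perm (Fin (2*p))) with hzP
        have r1 := cross z hz a w1 hw1
        set z1 : (alternatingGroup (Fin (2*p))) := ⟨swap a w1 * zP * (swap a w1)⁻¹, memA (swap a w1) z⟩ with hz1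
        have hz1m : z1 ∈ C := conjmem (swap a w1) z hz
        have hnsc2 : ¬ (z1 : Perm (Fin (2*p))).SameCycle b a := by
          show ¬ (swap a w1 * zP * (swap a w1)⁻¹).SameCycle b a
          rw [Equiv.Perm.sameCycle_conj, show (swap a w1)⁻¹ = swap a w1 from Equiv.swap_inv _ _,
            swap_apply_of_ne_of_ne hab.symm hbw1, swap_apply_left]
          intro h; exact hw1 (hsc.trans h)
        have r2 := cross z1 hz1m b a hnsc2
        set z2 : (alternatingGroup (Fin (2*p))) := ⟨swap b a * (z1 : Perm (Fin (2*p))) * (swap b a)⁻¹, memA (swap b a) z1⟩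
          with hz2
        have hz2m : z2 ∈ C := conjmem (swap b a) z1 hz1m
        have hnsc3 : ¬ (z2 : Perm (Fin (2*p))).SameCycle b w1 := by
          show ¬ (swap b a * (z1 : Perm (Fin (2*p))) * (swap b a)⁻¹).SameCycle b w1
          rw [Equiv.Perm.sameCycle_conj, show (swap b a)⁻¹ = swap b a from Equiv.swap_inv _ _,
            swap_apply_left, swap_apply_of_ne_of_ne (Ne.symm hbw1) (Ne.symm haw1)]
          show ¬ (swap a w1 * zP * (swap a w1)⁻¹).SameCycle a w1
          rw [Equiv.Perm.sameCycle_conj, show (swap a w1)⁻¹ = swap a w1 from Equiv.swap_inv _ _,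
            swap_apply_left, swap_apply_right]
          intro h; exact hw1 h.symm
        have r3 := cross z2 hz2m b w1 hnsc3
        have hprod : swap b w1 * (swap b a * swap a w1) = swap a b := by
          ext w
          simp only [Equiv.Perm.mul_apply]
          rcases eq_or_ne w a with rfl | hwa
          · rw [swap_apply_left, swap_apply_of_ne_of_ne (Ne.symm hbw1) (Ne.symm haw1),
              swap_apply_right, swap_apply_left]
          rcases eq_or_ne w b with rfl | hwb
          · rw [swap_apply_of_ne_of_ne (Ne.symm hab) hbw1, swap_apply_left,
              swap_apply_of_ne_of_ne hab haw1, swap_apply_right]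
          rcases eq_or_ne w w1 with rfl | hww1
          · rw [swap_apply_right, swap_apply_right, swap_apply_left,
              swap_apply_of_ne_of_ne (Ne.symm haw1) (Ne.symm hbw1)]
          · rw [swap_apply_of_ne_of_ne hwa hww1, swap_apply_of_ne_of_ne hwb hwa,
              swap_apply_of_ne_of_ne hwb hww1, swap_apply_of_ne_of_ne hwa hwb]
        have conj2 : ∀ (g h w : Perm (Fin (2*p))),
            g * (h * w * h⁻¹) * g⁻¹ = (g*h) * w * (g*h)⁻¹ := by
          intros g h w; simp [mul_inv_rev, mul_assoc]
        refine (r1.trans (r2.trans (r3.trans ?_)))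
        refine reach_eq _ _ ?_
        apply Subtype.ext
        show swap b w1 * (z2 : Perm (Fin (2*p))) * (swap b w1)⁻¹ =
          swap a b * zP * (swap a b)⁻¹
        rw [hz2]
        show swap b w1 * (swap b a * ((z1 : Perm (Fin (2*p)))) * (swap b a)⁻¹) * (swap b w1)⁻¹ = _
        rw [hz1]
        show swap b w1 * (swap b a * (swap a w1 * zP * (swap a w1)⁻¹) * (swap b a)⁻¹) *
          (swap b w1)⁻¹ = _
        rw [conj2, conj2, mul_assoc (swap b w1) (swap b a) (swap a w1), hprod]
      · exact cross z hz a b hsc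
  -- main induction
  have mx : x ∈ C := by rw [memC]
  have main : ∀ g : Perm (Fin (2*p)),
      κ.Reachable ⟨x, mx⟩ ⟨⟨g * (x : Perm (Fin (2*p))) * g⁻¹, memA g x⟩, conjmem g x mx⟩ := by
    intro g
    refine Equiv.Perm.swap_induction_on g ?_ ?_
    · refine reach_eq _ _ ?_
      apply Subtype.ext
      simp
    · intro f a b hab ih
      refine ih.trans ?_
      have := rstep ⟨f * (x : Perm (Fin (2*p))) * f⁻¹, memA f x⟩ (conjmem f x mx) a b
      refine this.trans (reach_eq _ _ ?_)
      apply Subtype.ext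
      show swap a b * (f * (x : Perm (Fin (2*p))) * f⁻¹) * (swap a b)⁻¹ = _
      simp only [mul_inv_rev, mul_assoc]
  rw [SimpleGraph.connected_iff]
  refine ⟨?_, ⟨⟨x, mx⟩⟩⟩
  intro u v
  have reach_from_x : ∀ (w : C), κ.Reachable ⟨x, mx⟩ w := by
    intro ⟨h, hh⟩
    have hconj : IsConj x h := hh
    obtain ⟨c, hc⟩ := isConj_iff.1 hconj
    refine (main (c : Perm (Fin (2*p)))).trans (reach_eq _ _ ?_)
    apply Subtype.ext
    show (c : Perm (Fin (2*p))) * (x : Perm (Fin (2*p))) * (c : Perm (Fin (2*p)))⁻¹ =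
      (h : Perm (Fin (2*p)))
    have := congrArg (Subtype.val) hc
    push_cast at this
    exact this
  exact (reach_from_x u).symm.trans (reach_from_x v)

end PartA


end Statement18Aux

/-- For a prime `p ≥ 5`: (i) the Killing graph of any conjugacy class of elements
of order `p` in `S_{2p}` is connected; (ii) likewise in `A_{2p}`. -/
theorem statement18 (p : ℕ) (hp : p.Prime) (hp5 : 5 ≤ p) :
    (∀ x : Equiv.Perm (Fin (2 * p)), orderOf x = p →
      (killingGraph {h : Equiv.Perm (Fin (2 * p)) | IsConj x h}).Connected) ∧
    (∀ x : alternatingGroup (Fin (2 * p)), orderOf x = p →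
      (killingGraph {h : alternatingGroup (Fin (2 * p)) | IsConj x h}).Connected) :=
  ⟨fun x hx => Statement18Aux.partS hp hp5 x hx,
   fun x hx => Statement18Aux.partA hp hp5 x hx⟩
end

section
/- Let n be an odd positive integer and let G be the dihedral group of order 2n. Let 𝒞 ⊆ G \ {1} be a subset that is closed under conjugation and generates G. Then the matrix K : 𝒞 × 𝒞 → ℚ defined by K(a,b) = |C_G(ab) ∩ 𝒞| is invertible (its determinant is nonzero); that is, the Killing form K_𝒞 is non-degenerate. In particular, the dihedral group of order 2n with n odd is strongly non-degenerate. -/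
private def dsgn {n : ℕ} : DihedralGroup n →* ℤˣ where
  toFun g := match g with | .r _ => 1 | .sr _ => -1
  map_one' := rfl
  map_mul' := by
    rintro (i|i) (j|j) <;>
      simp [DihedralGroup.r_mul_r, DihedralGroup.r_mul_sr, DihedralGroup.sr_mul_r,
        DihedralGroup.sr_mul_sr]

/-- Dihedral groups of order `2n`, `n` odd, are strongly non-degenerate: for any
conjugation-stable generating subset `𝒞` not containing `1`, the matrix of the
Killing form over `ℚ` has nonzero determinant. -/
theorem statement19 (n : ℕ) (hodd : Odd n) (𝒞 : Set (DihedralGroup n))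
    [Fintype 𝒞] [DecidableEq 𝒞]
    (h1 : (1 : DihedralGroup n) ∉ 𝒞)
    (hconj : ∀ g : DihedralGroup n, ∀ c ∈ 𝒞, g * c * g⁻¹ ∈ 𝒞)
    (hgen : Subgroup.closure 𝒞 = ⊤) :
    (killingMatrix 𝒞).det ≠ 0 := by
  classical
  have hn0 : n ≠ 0 := by rintro rfl; exact (Nat.not_odd_iff_even.mpr Even.zero) hodd
  have : NeZero n := ⟨hn0⟩
  -- 2 is a unit in ZMod n
  have h2 : IsUnit (2 : ZMod n) := by
    have := (ZMod.isUnit_iff_coprime 2 n).mpr (Nat.coprime_two_left.mpr hodd)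
    simpa using this
  have hcancel : ∀ i j : ZMod n, 2 * i = 2 * j → i = j := fun i j h => h2.mul_left_cancel h
  have hhalf : ∀ k : ZMod n, ∃ i : ZMod n, 2 * i = k := by
    intro k
    obtain ⟨u, hu⟩ := h2
    exact ⟨(↑u⁻¹ : ZMod n) * k, by rw [← mul_assoc, ← hu, Units.mul_inv, one_mul]⟩
  -- 𝒞 contains a reflection
  have hs : ∃ j : ZMod n, DihedralGroup.sr j ∈ 𝒞 := by
    by_contra h
    push_neg at h
    have hsub : 𝒞 ⊆ (dsgn.ker : Subgroup (DihedralGroup n)) := by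
      intro c hc
      cases c with
      | r i => exact rfl
      | sr i => exact absurd hc (h i)
    have htop : (⊤ : Subgroup (DihedralGroup n)) ≤ dsgn.ker := by
      rw [← hgen]; exact (Subgroup.closure_le _).mpr hsub
    have := htop (Subgroup.mem_top (DihedralGroup.sr 0))
    rw [MonoidHom.mem_ker, show dsgn (DihedralGroup.sr 0) = -1 from rfl] at this
    exact absurd this (by decide)
  -- all reflections are in 𝒞
  have hSall : ∀ k : ZMod n, DihedralGroup.sr k ∈ 𝒞 := by
    obtain ⟨j, hj⟩ := hs
    intro k
    obtain ⟨i, hi⟩ := hhalf (j - k)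
    have hmem := hconj (DihedralGroup.r i) _ hj
    have heq : DihedralGroup.r i * DihedralGroup.sr j * (DihedralGroup.r i)⁻¹
        = DihedralGroup.sr k := by
      have hinv : (DihedralGroup.r i)⁻¹ = DihedralGroup.r (-i) := rfl
      rw [hinv, DihedralGroup.r_mul_sr, DihedralGroup.sr_mul_r]
      congr 1
      linear_combination -hi
    rwa [heq] at hmem
  -- rotation part of 𝒞 is inverse-closed
  have hRinv : ∀ i : ZMod n, DihedralGroup.r i ∈ 𝒞 → DihedralGroup.r (-i) ∈ 𝒞 := by
    intro i hi
    have hmem := hconj (DihedralGroup.sr (0 : ZMod n)) _ hi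
    have heq : DihedralGroup.sr 0 * DihedralGroup.r i * (DihedralGroup.sr 0)⁻¹
        = DihedralGroup.r (-i) := by
      have hinv : (DihedralGroup.sr (0 : ZMod n))⁻¹ = DihedralGroup.sr 0 := rfl
      rw [hinv, DihedralGroup.sr_mul_r, DihedralGroup.sr_mul_sr]
      congr 1
      ring
    rwa [heq] at hmem
  -- commuting with a nontrivial rotation
  have hcomm_r : ∀ (c : DihedralGroup n) (k : ZMod n), k ≠ 0 →
      (Commute c (DihedralGroup.r k) ↔ ∃ i, c = DihedralGroup.r i) := by
    intro c k hk
    cases c with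
    | r i =>
      simp only [commute_iff_eq, DihedralGroup.r_mul_r]
      constructor
      · intro _; exact ⟨i, rfl⟩
      · intro _; rw [add_comm]
    | sr i =>
      simp only [commute_iff_eq, DihedralGroup.sr_mul_r, DihedralGroup.r_mul_sr]
      constructor
      · intro h
        have h' : i + k = i - k := by injection h
        exact absurd (hcancel k 0 (by linear_combination h')) hk
      · rintro ⟨j, h⟩; exact absurd h (by simp)
  -- commuting with a reflection
  have hcomm_sr : ∀ (k : ZMod n) (c : DihedralGroup n), c ∈ 𝒞 →
      (Commute c (DihedralGroup.sr k) ↔ c = DihedralGroup.sr k) := by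
    intro k c hc
    constructor
    · intro hcm
      rw [commute_iff_eq] at hcm
      cases c with
      | r i =>
        exfalso
        have h' : k - i = k + i := by
          have := hcm
          rw [DihedralGroup.r_mul_sr, DihedralGroup.sr_mul_r] at this
          injection this
        have hi0 : i = 0 := hcancel i 0 (by linear_combination -h')
        rw [hi0] at hc
        exact h1 hc
      | sr j =>
        have h' : k - j = j - k := by
          have := hcm
          rw [DihedralGroup.sr_mul_sr, DihedralGroup.sr_mul_sr] at this
          injection this
        have : j = k := hcancel j k (by linear_combination -h')
        rw [this]
    · rintro rfl; exact Commute.refl _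
  -- the finsets of rotations and reflections in 𝒞
  set Rfin : Finset (DihedralGroup n) :=
    (Set.toFinset 𝒞).filter (fun g => ∃ i, g = DihedralGroup.r i) with hRfin_def
  set Sfin : Finset (DihedralGroup n) :=
    (Finset.univ : Finset (ZMod n)).image DihedralGroup.sr with hSfin_def
  have hsr_inj : Function.Injective (DihedralGroup.sr (n := n)) := by
    intro a b h; injection h
  have hRmem : ∀ g, g ∈ Rfin ↔ (g ∈ 𝒞 ∧ ∃ i, g = DihedralGroup.r i) := by
    intro g; simp [hRfin_def, Set.mem_toFinset]
  have hSfin_eq : (Set.toFinset 𝒞).filter (fun g => ¬ ∃ i, g = DihedralGroup.r i) = Sfin := by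
    ext g
    simp only [Finset.mem_filter, Set.mem_toFinset, hSfin_def, Finset.mem_image,
      Finset.mem_univ, true_and]
    constructor
    · rintro ⟨hg, hnr⟩
      cases g with
      | r i => exact absurd ⟨i, rfl⟩ hnr
      | sr j => exact ⟨j, rfl⟩
    · rintro ⟨j, rfl⟩
      exact ⟨hSall j, by rintro ⟨i, h⟩; cases h⟩
  set m : ℕ := Rfin.card with hm_def
  set N : ℕ := (Set.toFinset 𝒞).card with hN_def
  have hScard : Sfin.card = n := by
    rw [hSfin_def, Finset.card_image_of_injective _ hsr_inj, Finset.card_univ, ZMod.card]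
  have hNmn : N = m + n := by
    rw [hN_def, hm_def, ← Finset.card_filter_add_card_filter_not
      (s := Set.toFinset 𝒞) (p := fun g => ∃ i, g = DihedralGroup.r i), hSfin_eq, hScard]
  -- the three ncard computations
  have hK1 : {c ∈ 𝒞 | Commute c (1 : DihedralGroup n)}.ncard = N := by
    have hset : {c ∈ 𝒞 | Commute c (1 : DihedralGroup n)} = 𝒞 := by
      ext c; simp [Commute.one_right]
    rw [hset, Set.ncard_eq_toFinset_card']
  have hKr : ∀ k : ZMod n, k ≠ 0 →
      {c ∈ 𝒞 | Commute c (DihedralGroup.r k)}.ncard = m := by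
    intro k hk
    have hset : {c ∈ 𝒞 | Commute c (DihedralGroup.r k)} = ↑Rfin := by
      ext g
      simp only [Set.mem_setOf_eq, Finset.coe_filter, Set.mem_toFinset, hRfin_def,
        Set.mem_setOf_eq]
      exact and_congr_right fun _ => hcomm_r g k hk
    rw [hset, Set.ncard_coe_finset]
  have hKs : ∀ k : ZMod n, {c ∈ 𝒞 | Commute c (DihedralGroup.sr k)}.ncard = 1 := by
    intro k
    have hset : {c ∈ 𝒞 | Commute c (DihedralGroup.sr k)} = {DihedralGroup.sr k} := by
      ext c
      simp only [Set.mem_setOf_eq, Set.mem_singleton_iff]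
      constructor
      · rintro ⟨hc, hcm⟩; exact (hcomm_sr k c hc).mp hcm
      · rintro rfl; exact ⟨hSall k, Commute.refl _⟩
    rw [hset, Set.ncard_singleton]
  -- main argument
  intro hdet
  obtain ⟨v, hv0, hmv⟩ := Matrix.exists_mulVec_eq_zero_iff.mpr hdet
  set w : DihedralGroup n → ℚ := fun g => if h : g ∈ 𝒞 then v ⟨g, h⟩ else 0 with hw_def
  have hw : ∀ (g) (hg : g ∈ 𝒞), w g = v ⟨g, hg⟩ := fun g hg => dif_pos hg
  -- row equations
  have hrow : ∀ a ∈ 𝒞,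
      ∑ g ∈ Set.toFinset 𝒞, ({c ∈ 𝒞 | Commute c (a * g)}.ncard : ℚ) * w g = 0 := by
    intro a ha
    have hfun := congrFun hmv ⟨a, ha⟩
    rw [Matrix.mulVec, dotProduct] at hfun
    rw [Pi.zero_apply] at hfun
    rw [Finset.sum_subtype (Set.toFinset 𝒞) (fun x => Set.mem_toFinset)
      (fun g => ({c ∈ 𝒞 | Commute c (a * g)}.ncard : ℚ) * w g)]
    rw [← hfun]
    apply Finset.sum_congr rfl
    intro b _
    rw [hw b b.2]
    rfl
  -- split row sums
  have hsplit : ∀ a ∈ 𝒞,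
      (∑ g ∈ Rfin, ({c ∈ 𝒞 | Commute c (a * g)}.ncard : ℚ) * w g)
      + ∑ j : ZMod n, ({c ∈ 𝒞 | Commute c (a * DihedralGroup.sr j)}.ncard : ℚ)
          * w (DihedralGroup.sr j) = 0 := by
    intro a ha
    have h0 := hrow a ha
    rw [← Finset.sum_filter_add_sum_filter_not (Set.toFinset 𝒞)
      (fun g => ∃ i, g = DihedralGroup.r i)
      (fun g => ({c ∈ 𝒞 | Commute c (a * g)}.ncard : ℚ) * w g), hSfin_eq, hSfin_def,
      Finset.sum_image (fun a _ b _ h => hsr_inj h), ← hRfin_def] at h0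
    exact h0
  set P : ℚ := ∑ g ∈ Rfin, w g with hP_def
  set Q : ℚ := ∑ j : ZMod n, w (DihedralGroup.sr j) with hQ_def
  -- reflection rows
  have hrowS : ∀ x : ZMod n, P + (m : ℚ) * Q + (n : ℚ) * w (DihedralGroup.sr x) = 0 := by
    intro x
    have h0 := hsplit (DihedralGroup.sr x) (hSall x)
    have hA : (∑ g ∈ Rfin, ({c ∈ 𝒞 | Commute c (DihedralGroup.sr x * g)}.ncard : ℚ) * w g)
        = P := by
      apply Finset.sum_congr rfl
      intro g hg
      obtain ⟨hg𝒞, i, rfl⟩ := (hRmem g).mp hg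
      rw [DihedralGroup.sr_mul_r, hKs]
      norm_num
    have hB : (∑ j : ZMod n,
          ({c ∈ 𝒞 | Commute c (DihedralGroup.sr x * DihedralGroup.sr j)}.ncard : ℚ)
            * w (DihedralGroup.sr j))
        = (m : ℚ) * Q + (n : ℚ) * w (DihedralGroup.sr x) := by
      have hpt : ∀ j : ZMod n,
          ({c ∈ 𝒞 | Commute c (DihedralGroup.sr x * DihedralGroup.sr j)}.ncard : ℚ)
            * w (DihedralGroup.sr j)
          = (m : ℚ) * w (DihedralGroup.sr j)
            + (if j = x then (n : ℚ) * w (DihedralGroup.sr j) else 0) := by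
        intro j
        rw [DihedralGroup.sr_mul_sr]
        by_cases hjx : j = x
        · subst hjx
          rw [if_pos rfl, sub_self, show DihedralGroup.r (0 : ZMod n) = 1 from rfl, hK1, hNmn]
          push_cast; ring
        · rw [if_neg hjx, hKr _ (fun h => hjx (by linear_combination h))]
          ring
      rw [Finset.sum_congr rfl (fun j _ => hpt j), Finset.sum_add_distrib,
        Finset.sum_ite_eq' Finset.univ x (fun j => (n : ℚ) * w (DihedralGroup.sr j)),
        if_pos (Finset.mem_univ x), ← Finset.mul_sum, ← hQ_def]
    rw [hA, hB] at h0
    linarith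
  -- rotation rows
  have hrowR : ∀ x : ZMod n, DihedralGroup.r x ∈ 𝒞 →
      (m : ℚ) * P + (n : ℚ) * w (DihedralGroup.r (-x)) + Q = 0 := by
    intro x hx
    have h0 := hsplit (DihedralGroup.r x) hx
    have hnegmem : DihedralGroup.r (-x) ∈ Rfin := (hRmem _).mpr ⟨hRinv x hx, ⟨-x, rfl⟩⟩
    have hA : (∑ g ∈ Rfin, ({c ∈ 𝒞 | Commute c (DihedralGroup.r x * g)}.ncard : ℚ) * w g)
        = (m : ℚ) * P + (n : ℚ) * w (DihedralGroup.r (-x)) := by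
      have hpt : ∀ g ∈ Rfin,
          ({c ∈ 𝒞 | Commute c (DihedralGroup.r x * g)}.ncard : ℚ) * w g
          = (m : ℚ) * w g + (if g = DihedralGroup.r (-x) then (n : ℚ) * w g else 0) := by
        intro g hg
        obtain ⟨hg𝒞, i, rfl⟩ := (hRmem g).mp hg
        rw [DihedralGroup.r_mul_r]
        by_cases hix : i = -x
        · subst hix
          rw [if_pos rfl, show x + -x = (0 : ZMod n) by ring,
            show DihedralGroup.r (0 : ZMod n) = 1 from rfl, hK1, hNmn]
          push_cast; ring
        · rw [if_neg (fun h => hix (by injection h)),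
            hKr _ (fun h => hix (by linear_combination h))]
          ring
      rw [Finset.sum_congr rfl hpt, Finset.sum_add_distrib,
        Finset.sum_ite_eq' Rfin (DihedralGroup.r (-x)) (fun g => (n : ℚ) * w g),
        if_pos hnegmem, ← Finset.mul_sum, ← hP_def]
    have hB : (∑ j : ZMod n,
          ({c ∈ 𝒞 | Commute c (DihedralGroup.r x * DihedralGroup.sr j)}.ncard : ℚ)
            * w (DihedralGroup.sr j)) = Q := by
      rw [hQ_def]
      apply Finset.sum_congr rfl
      intro j _
      rw [DihedralGroup.r_mul_sr, hKs]
      norm_num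
    rw [hA, hB] at h0
    linarith
  -- the reflection values are constant
  set c : ℚ := w (DihedralGroup.sr 0) with hc_def
  have hnQ : (n : ℚ) ≠ 0 := Nat.cast_ne_zero.mpr hn0
  have hvs_const : ∀ x : ZMod n, w (DihedralGroup.sr x) = c := by
    intro x
    have ha := hrowS x
    have hb := hrowS 0
    rw [← hc_def] at hb
    have : (n : ℚ) * w (DihedralGroup.sr x) = (n : ℚ) * c := by linarith
    exact mul_left_cancel₀ hnQ this
  have hQc : Q = (n : ℚ) * c := by
    rw [hQ_def, Finset.sum_congr rfl (fun j _ => hvs_const j), Finset.sum_const,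
      Finset.card_univ, ZMod.card, nsmul_eq_mul]
  by_cases hR : Rfin.Nonempty
  · -- nonempty rotation part
    obtain ⟨g₀, hg₀⟩ := hR
    obtain ⟨hg₀𝒞, y₀, rfl⟩ := (hRmem g₀).mp hg₀
    set c' : ℚ := w (DihedralGroup.r y₀) with hc'_def
    have hrconst : ∀ yy : ZMod n, DihedralGroup.r yy ∈ 𝒞 → w (DihedralGroup.r yy) = c' := by
      intro yy hyy
      have hA := hrowR (-yy) (hRinv _ hyy)
      have hB := hrowR (-y₀) (hRinv _ hg₀𝒞)
      rw [neg_neg] at hA hB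
      rw [← hc'_def] at hB
      have : (n : ℚ) * w (DihedralGroup.r yy) = (n : ℚ) * c' := by linarith
      exact mul_left_cancel₀ hnQ this
    have hPc : P = (m : ℚ) * c' := by
      have hall : ∀ g ∈ Rfin, w g = c' := by
        intro g hg
        obtain ⟨hg𝒞, i, rfl⟩ := (hRmem g).mp hg
        exact hrconst i hg𝒞
      rw [hP_def, Finset.sum_congr rfl hall, Finset.sum_const, nsmul_eq_mul, hm_def]
    have hm1 : (1 : ℚ) ≤ (m : ℚ) := by
      have : 0 < m := Finset.card_pos.mpr ⟨_, hg₀⟩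
      exact_mod_cast this
    have hn1 : (1 : ℚ) ≤ (n : ℚ) := by
      exact_mod_cast Nat.one_le_iff_ne_zero.mpr hn0
    have hE1 : (m : ℚ) * c' + (m : ℚ) * ((n : ℚ) * c) + (n : ℚ) * c = 0 := by
      have := hrowS 0
      rw [← hc_def, hQc, hPc] at this
      linarith
    have hE2 : (m : ℚ) * ((m : ℚ) * c') + (n : ℚ) * c' + (n : ℚ) * c = 0 := by
      have := hrowR y₀ hg₀𝒞
      rw [hPc, hQc, hrconst _ (hRinv _ hg₀𝒞)] at this
      linarith
    have key : ((m : ℚ) - ((m : ℚ) + 1) * ((m : ℚ) ^ 2 + (n : ℚ))) * c' = 0 := by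
      linear_combination hE1 - ((m : ℚ) + 1) * hE2
    have hcoef : (m : ℚ) - ((m : ℚ) + 1) * ((m : ℚ) ^ 2 + (n : ℚ)) ≠ 0 := by
      have haux : (0 : ℚ) ≤ (m : ℚ) * ((m : ℚ) - 1) :=
        mul_nonneg (by linarith) (by linarith)
      have : (m : ℚ) - ((m : ℚ) + 1) * ((m : ℚ) ^ 2 + (n : ℚ)) < 0 := by nlinarith
      exact ne_of_lt this
    have hc'0 : c' = 0 := (mul_eq_zero.mp key).resolve_left hcoef
    have hc0 : c = 0 := by
      rw [hc'0] at hE2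
      have : (n : ℚ) * c = 0 := by linarith
      exact (mul_eq_zero.mp this).resolve_left hnQ
    apply hv0
    funext b
    simp only [Pi.zero_apply]
    obtain ⟨g, hg⟩ := b
    rw [← hw g hg]
    cases g with
    | r i => rw [hrconst i hg]; exact hc'0
    | sr j => rw [hvs_const j]; exact hc0
  · -- empty rotation part
    have hRe : Rfin = ∅ := Finset.not_nonempty_iff_eq_empty.mp hR
    have hm0 : m = 0 := by rw [hm_def, hRe, Finset.card_empty]
    have hP0 : P = 0 := by rw [hP_def, hRe, Finset.sum_empty]
    have hc0 : c = 0 := by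
      have := hrowS 0
      rw [← hc_def, hP0, hm0] at this
      have h' : (n : ℚ) * c = 0 := by push_cast at this ⊢; linarith
      exact (mul_eq_zero.mp h').resolve_left hnQ
    apply hv0
    funext b
    simp only [Pi.zero_apply]
    obtain ⟨g, hg⟩ := b
    rw [← hw g hg]
    cases g with
    | r i =>
      exact absurd ((hRmem _).mpr ⟨hg, ⟨i, rfl⟩⟩) (by rw [hRe]; simp)
    | sr j => rw [hvs_const j]; exact hc0
end
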